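/- arXiv:2604.23610 — 4 statements merged into one kernel-verified Lean document; each statement's English description precedes it below -/
import Mathlib

section
/- If V and T are independent positive random variables with P(V > t) ~ t^{-α} and P(T > t) ~ t^{-α} as t → ∞ for the same exponent α > 0, then P(VT > z) ~ α z^{-α} log z as z → ∞. -/
open MeasureTheory ProbabilityTheory Filter

open Set
open scoped ENNReal NNReal

private lemma aux_tendsto_of_abs_le {f : ℝ → ℝ} {a : ℝ}
    (h : ∀ ε : ℝ, 0 < ε → ∀ᶠ z in atTop, |f z - a| ≤ ε) :
    Tendsto f atTop (nhds a) := by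
  rw [Metric.tendsto_nhds]
  intro ε hε
  filter_upwards [h (ε/2) (by positivity)] with z hz
  rw [Real.dist_eq]
  linarith

private lemma aux_tendsto_of_squeeze {f r : ℝ → ℝ} {a : ℝ}
    (hr : Tendsto r atTop (nhds a))
    (h : ∀ ε : ℝ, 0 < ε → ∀ᶠ z in atTop, (1 - ε) * r z ≤ f z ∧ f z ≤ (1 + ε) * r z) :
    Tendsto f atTop (nhds a) := by
  apply aux_tendsto_of_abs_le
  intro ε hε
  have hδ : (0:ℝ) < ε / (2 * (|a| + 2)) := by positivity
  have h2 : ∀ᶠ z in atTop, |r z - a| < min 1 (ε/2) := by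
    have := Metric.tendsto_nhds.mp hr (min 1 (ε/2)) (by positivity)
    simpa [Real.dist_eq] using this
  filter_upwards [h _ hδ, h2] with z hz hrz
  obtain ⟨hl, hu⟩ := hz
  set δ := ε / (2 * (|a| + 2)) with hδdef
  have hra : |r z| ≤ |a| + 1 := by
    have h3 := abs_sub_abs_le_abs_sub (r z) a
    have h4 : |r z - a| ≤ 1 := le_trans hrz.le (min_le_left _ _)
    linarith
  have habs : |r z| ≥ r z := le_abs_self _
  have hfr : |f z - r z| ≤ δ * |r z| := by
    rw [abs_le]
    constructor <;> nlinarith [hδ.le]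
  have hfin : δ * (|a| + 1) ≤ ε / 2 := by
    rw [hδdef, div_mul_eq_mul_div, div_le_div_iff₀ (by positivity) (by norm_num)]
    nlinarith [abs_nonneg a]
  have h5 : |r z - a| ≤ ε / 2 := le_trans hrz.le (min_le_right _ _)
  calc |f z - a| ≤ |f z - r z| + |r z - a| := abs_sub_le _ _ _
    _ ≤ δ * (|a| + 1) + ε/2 := by
        have : δ * |r z| ≤ δ * (|a| + 1) := by nlinarith [hδ.le]
        linarith
    _ ≤ ε := by linarith

private lemma aux_keyK {h : ℝ → ℝ} (hmeas : Measurable h)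
    (h0 : ∀ t, 0 ≤ h t) (h1 : ∀ t, h t ≤ 1)
    (hlim : Tendsto (fun t => t * h t) atTop (nhds 1)) :
    Tendsto (fun y => (∫ t in Set.Ioc 0 y, h t) / Real.log y) atTop (nhds 1) := by
  have hint : ∀ a b : ℝ, IntegrableOn h (Set.Ioc a b) := by
    intro a b
    apply Integrable.mono' (integrable_const 1) hmeas.aestronglyMeasurable
    exact ae_of_all _ fun t => by rw [Real.norm_eq_abs, abs_of_nonneg (h0 t)]; exact h1 t
  apply aux_tendsto_of_abs_le
  intro ε hε
  set ε' := min (ε/2) (1/2) with hε'def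
  have hε'pos : 0 < ε' := by positivity
  have hε'le : ε' ≤ ε/2 := min_le_left _ _
  have hε'half : ε' ≤ 1/2 := min_le_right _ _
  obtain ⟨M0, hM0⟩ := eventually_atTop.mp (Metric.tendsto_nhds.mp hlim ε' hε'pos)
  set M := max M0 1 with hMdef
  have hM1 : (1:ℝ) ≤ M := le_max_right _ _
  have hM0' : (0:ℝ) < M := lt_of_lt_of_le one_pos hM1
  have hlogM : 0 ≤ Real.log M := Real.log_nonneg hM1
  have hbnd : ∀ t : ℝ, M ≤ t → (1 - ε') * t⁻¹ ≤ h t ∧ h t ≤ (1 + ε') * t⁻¹ := by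
    intro t ht
    have ht0 : 0 < t := lt_of_lt_of_le hM0' ht
    have := hM0 t (le_trans (le_max_left _ _) ht)
    rw [Real.dist_eq, abs_lt] at this
    have hinv : t * t⁻¹ = 1 := mul_inv_cancel₀ ht0.ne'
    constructor <;> nlinarith [inv_pos.mpr ht0]
  -- the constant threshold
  set C := max (2*M/ε) (max (2*Real.log M/ε) 1) with hCdef
  filter_upwards [eventually_ge_atTop M, eventually_ge_atTop (Real.exp C)] with y hyM hyE
  have hy0 : 0 < y := lt_of_lt_of_le hM0' hyM
  have hL : C ≤ Real.log y := (Real.le_log_iff_exp_le hy0).mpr hyE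
  have hL1 : (1:ℝ) ≤ Real.log y := le_trans (le_trans (le_max_right _ _) (le_max_right _ _)) hL
  have hLpos : 0 < Real.log y := lt_of_lt_of_le one_pos hL1
  have hLM : 2*M/ε ≤ Real.log y := le_trans (le_max_left _ _) hL
  have hLlogM : 2*Real.log M/ε ≤ Real.log y := le_trans (le_trans (le_max_left _ _) (le_max_right _ _)) hL
  have hlogMy : Real.log M ≤ Real.log y := Real.log_le_log hM0' hyM
  -- split the integral
  have hsplit : ∫ t in Set.Ioc 0 y, h t = (∫ t in Set.Ioc 0 M, h t) + ∫ t in Set.Ioc M y, h t := by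
    rw [← setIntegral_union (Set.Ioc_disjoint_Ioc_of_le le_rfl) measurableSet_Ioc (hint 0 M) (hint M y),
      Set.Ioc_union_Ioc_eq_Ioc hM0'.le hyM]
  -- inv integral
  have hinvint : ∫ t in Set.Ioc M y, t⁻¹ = Real.log y - Real.log M := by
    rw [← intervalIntegral.integral_of_le hyM, integral_inv
      (Set.notMem_uIcc_of_lt hM0' hy0), Real.log_div hy0.ne' hM0'.ne']
  have hinvmono : IntegrableOn (fun t : ℝ => t⁻¹) (Set.Ioc M y) := by
    apply Integrable.mono' (integrable_const M⁻¹) measurable_inv.aestronglyMeasurable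
    rw [ae_restrict_iff' measurableSet_Ioc]
    refine ae_of_all _ fun t ht => ?_
    rw [Real.norm_eq_abs, abs_of_nonneg (inv_nonneg.mpr (le_of_lt (hM0'.trans ht.1)))]
    exact inv_anti₀ hM0' ht.1.le
  have hup2 : ∫ t in Set.Ioc M y, h t ≤ (1 + ε') * (Real.log y - Real.log M) := by
    rw [← hinvint, ← integral_const_mul]
    refine setIntegral_mono_on (hint M y) (hinvmono.const_mul _) measurableSet_Ioc fun t ht => ?_
    exact (hbnd t ht.1.le).2
  have hlow2 : (1 - ε') * (Real.log y - Real.log M) ≤ ∫ t in Set.Ioc M y, h t := by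
    rw [← hinvint, ← integral_const_mul]
    refine setIntegral_mono_on (hinvmono.const_mul _) (hint M y) measurableSet_Ioc fun t ht => ?_
    exact (hbnd t ht.1.le).1
  have hlow1 : 0 ≤ ∫ t in Set.Ioc 0 M, h t := setIntegral_nonneg measurableSet_Ioc fun t _ => h0 t
  have hup1 : ∫ t in Set.Ioc 0 M, h t ≤ M := by
    have := setIntegral_mono_on (hint 0 M) (integrableOn_const measure_Ioc_lt_top.ne)
      measurableSet_Ioc (fun t _ => h1 t)
    simp [Real.volume_Ioc, ENNReal.toReal_ofReal hM0'.le] at this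
    rcases this with h | h <;> linarith
  have k1 : 2*M ≤ Real.log y * ε := (div_le_iff₀ hε).mp hLM
  have k2 : 2 * Real.log M ≤ Real.log y * ε := (div_le_iff₀ hε).mp hLlogM
  have k4 : ε' * Real.log y ≤ (ε/2) * Real.log y := mul_le_mul_of_nonneg_right hε'le hLpos.le
  have k5 : 0 ≤ ε' * Real.log M := mul_nonneg hε'pos.le hlogM
  rw [abs_le]
  constructor
  · rw [le_sub_iff_add_le]
    refine (le_div_iff₀ hLpos).mpr ?_
    nlinarith [hlow1, hlow2, hsplit, k2, k4, k5]
  · rw [sub_le_iff_le_add, div_le_iff₀ hLpos]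
    nlinarith [hsplit, hup1, hup2, k1, k4, k5, hlogM, hLpos.le]

private lemma aux_keyJ (ν : Measure ℝ) [IsProbabilityMeasure ν] {α : ℝ} (hα : 0 < α)
    (hF : Tendsto (fun t => (ν (Set.Ioi t)).toReal * t ^ α) atTop (nhds 1)) :
    Tendsto (fun x => (∫ v in Set.Ioc 0 x, v ^ α ∂ν) / Real.log x) atTop (nhds α) := by
  have hFmeas : Measurable (fun t : ℝ => ν (Set.Ioi t)) :=
    Antitone.measurable (fun a b hab => measure_mono (Set.Ioi_subset_Ioi hab))
  have hrpowmeas : Measurable (fun t : ℝ => t ^ α⁻¹) :=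
    (Real.continuous_rpow_const (by positivity)).measurable
  have hrpowmeas' : Measurable (fun v : ℝ => v ^ α) :=
    (Real.continuous_rpow_const hα.le).measurable
  set h : ℝ → ℝ := fun t => (ν (Set.Ioi (t ^ α⁻¹))).toReal with hhdef
  have hhmeas : Measurable h := (hFmeas.comp hrpowmeas).ennreal_toReal
  have hh0 : ∀ t, 0 ≤ h t := fun t => ENNReal.toReal_nonneg
  have hh1 : ∀ t, h t ≤ 1 := by
    intro t
    have : ν (Set.Ioi (t ^ α⁻¹)) ≤ 1 := prob_le_one
    simpa using ENNReal.toReal_mono ENNReal.one_ne_top this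
  have hhlim : Tendsto (fun t => t * h t) atTop (nhds 1) := by
    have h₁ : Tendsto (fun t : ℝ => t ^ α⁻¹) atTop atTop := tendsto_rpow_atTop (by positivity)
    have h₂ := hF.comp h₁
    apply h₂.congr'
    filter_upwards [eventually_gt_atTop (0:ℝ)] with t ht
    simp only [Function.comp_apply]
    rw [Real.rpow_inv_rpow ht.le hα.ne', mul_comm]
  have hK := aux_keyK hhmeas hh0 hh1 hhlim
  -- the identity
  have hId : ∀ x : ℝ, 1 < x →
      (∫ v in Set.Ioc 0 x, v ^ α ∂ν)
        = (∫ t in Set.Ioc 0 (x ^ α), h t) - (ν (Set.Ioi x)).toReal * x ^ α := by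
    intro x hx
    have hx0 : (0:ℝ) < x := lt_trans one_pos hx
    have hy0 : (0:ℝ) < x ^ α := Real.rpow_pos_of_pos hx0 α
    have hsubset : ∀ t ∈ Set.Ioc (0:ℝ) (x ^ α), t ^ α⁻¹ ≤ x := by
      intro t ht
      have := Real.rpow_le_rpow ht.1.le ht.2 (inv_nonneg.mpr hα.le)
      rwa [Real.rpow_rpow_inv hx0.le hα.ne'] at this
    have e1 : ∫ v in Set.Ioc 0 x, v ^ α ∂ν
        = (∫⁻ v in Set.Ioc 0 x, ENNReal.ofReal (v ^ α) ∂ν).toReal := by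
      rw [integral_eq_lintegral_of_nonneg_ae]
      · exact (ae_restrict_iff' measurableSet_Ioc).2
          (ae_of_all _ fun v hv => Real.rpow_nonneg hv.1.le α)
      · exact hrpowmeas'.aestronglyMeasurable
    have e2 : ∫⁻ v in Set.Ioc 0 x, ENNReal.ofReal (v ^ α) ∂ν
        = ∫⁻ t in Set.Ioi 0, (ν.restrict (Set.Ioc 0 x)) {v | t < v ^ α} :=
      lintegral_eq_lintegral_meas_lt _
        ((ae_restrict_iff' measurableSet_Ioc).2
          (ae_of_all _ fun v hv => Real.rpow_nonneg hv.1.le α))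
        hrpowmeas'.aemeasurable
    have e3 : ∫⁻ t in Set.Ioi 0, (ν.restrict (Set.Ioc 0 x)) {v | t < v ^ α}
        = ∫⁻ t in Set.Ioi 0, ν (Set.Ioc (t ^ α⁻¹) x) := by
      refine setLIntegral_congr_fun_ae measurableSet_Ioi (ae_of_all _ fun t ht => ?_)
      rw [Measure.restrict_apply (measurableSet_lt measurable_const hrpowmeas')]
      congr 1
      ext v
      simp only [Set.mem_inter_iff, Set.mem_setOf_eq, Set.mem_Ioc]
      constructor
      · rintro ⟨htv, hv0, hvx⟩
        refine ⟨?_, hvx⟩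
        have := Real.rpow_lt_rpow (le_of_lt ht) htv (inv_pos.mpr hα)
        rwa [Real.rpow_rpow_inv hv0.le hα.ne'] at this
      · rintro ⟨hlt, hle⟩
        have htpos : 0 < t ^ α⁻¹ := Real.rpow_pos_of_pos ht α⁻¹
        have hv0 : 0 < v := lt_trans htpos hlt
        refine ⟨?_, hv0, hle⟩
        have := Real.rpow_lt_rpow htpos.le hlt hα
        rwa [Real.rpow_inv_rpow (le_of_lt ht) hα.ne'] at this
    have e4 : ∫⁻ t in Set.Ioi 0, ν (Set.Ioc (t ^ α⁻¹) x)
        = ∫⁻ t in Set.Ioc 0 (x ^ α), ν (Set.Ioc (t ^ α⁻¹) x) := by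
      rw [← Set.Ioc_union_Ioi_eq_Ioi hy0.le,
        lintegral_union measurableSet_Ioi Set.Ioc_disjoint_Ioi_same]
      have : ∫⁻ t in Set.Ioi (x ^ α), ν (Set.Ioc (t ^ α⁻¹) x) = 0 := by
        rw [setLIntegral_congr_fun_ae measurableSet_Ioi
          (ae_of_all _ (fun t (ht : x ^ α < t) => ?_)), lintegral_zero]
        have hxt : x < t ^ α⁻¹ := by
          have := Real.rpow_lt_rpow hy0.le ht (inv_pos.mpr hα)
          rwa [Real.rpow_rpow_inv hx0.le hα.ne'] at this
        rw [Set.Ioc_eq_empty (by exact fun hcon => absurd (lt_trans hxt hcon) (lt_irrefl x)),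
          measure_empty]
      rw [this, add_zero]
    have e5 : ∫⁻ t in Set.Ioc 0 (x ^ α), ν (Set.Ioc (t ^ α⁻¹) x)
        = ∫⁻ t in Set.Ioc 0 (x ^ α), (ν (Set.Ioi (t ^ α⁻¹)) - ν (Set.Ioi x)) := by
      refine setLIntegral_congr_fun_ae measurableSet_Ioc (ae_of_all _ fun t ht => ?_)
      rw [← Set.Ioi_diff_Ioi,
        measure_diff (Set.Ioi_subset_Ioi (hsubset t ht)) measurableSet_Ioi.nullMeasurableSet
          (measure_ne_top ν _)]
    have hptle : ∀ᵐ t ∂(volume.restrict (Set.Ioc 0 (x ^ α))),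
        (fun _ => ν (Set.Ioi x)) t ≤ ν (Set.Ioi (t ^ α⁻¹)) := by
      rw [ae_restrict_iff' measurableSet_Ioc]
      exact ae_of_all _ fun t ht => measure_mono (Set.Ioi_subset_Ioi (hsubset t ht))
    have hconstfin : ∫⁻ _ in Set.Ioc 0 (x ^ α), ν (Set.Ioi x) ≠ ⊤ := by
      rw [setLIntegral_const]
      exact ENNReal.mul_ne_top (measure_ne_top ν _) (by simp [Real.volume_Ioc])
    have e6 : ∫⁻ t in Set.Ioc 0 (x ^ α), (ν (Set.Ioi (t ^ α⁻¹)) - ν (Set.Ioi x))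
        = (∫⁻ t in Set.Ioc 0 (x ^ α), ν (Set.Ioi (t ^ α⁻¹)))
          - ∫⁻ _ in Set.Ioc 0 (x ^ α), ν (Set.Ioi x) :=
      lintegral_sub measurable_const hconstfin hptle
    set K := ∫⁻ t in Set.Ioc 0 (x ^ α), ν (Set.Ioi (t ^ α⁻¹)) with hKdef
    have hKfin : K ≠ ⊤ := by
      have hle : K ≤ ∫⁻ _ in Set.Ioc 0 (x ^ α), (1:ℝ≥0∞) :=
        lintegral_mono fun t => prob_le_one
      rw [setLIntegral_one] at hle
      exact ne_top_of_le_ne_top measure_Ioc_lt_top.ne hle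
    have hcle : ∫⁻ _ in Set.Ioc 0 (x ^ α), ν (Set.Ioi x) ≤ K :=
      lintegral_mono_ae hptle
    have e7 : K.toReal = ∫ t in Set.Ioc 0 (x ^ α), h t := by
      rw [hhdef]
      exact (integral_toReal ((hFmeas.comp hrpowmeas).aemeasurable)
        (ae_of_all _ fun t => measure_lt_top ν _)).symm
    have e8 : (∫⁻ _ in Set.Ioc 0 (x ^ α), ν (Set.Ioi x)).toReal
        = (ν (Set.Ioi x)).toReal * x ^ α := by
      rw [setLIntegral_const, ENNReal.toReal_mul]
      simp [Real.volume_Ioc, ENNReal.toReal_ofReal hy0.le]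
    rw [e1, e2, e3, e4, e5, e6, ENNReal.toReal_sub_of_le hcle hKfin, e7, e8]
  -- conclusion
  have t1 : Tendsto (fun x => (∫ t in Set.Ioc 0 (x ^ α), h t) / Real.log x) atTop (nhds α) := by
    have c1 := hK.comp (tendsto_rpow_atTop hα)
    have c2 := c1.const_mul α
    rw [mul_one] at c2
    apply c2.congr'
    filter_upwards [eventually_gt_atTop (1:ℝ)] with x hx
    have hx0 : (0:ℝ) < x := lt_trans one_pos hx
    have hlx : Real.log x ≠ 0 := (Real.log_pos hx).ne'
    simp only [Function.comp_apply]
    rw [Real.log_rpow hx0]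
    field_simp
  have t2 : Tendsto (fun x => (ν (Set.Ioi x)).toReal * x ^ α / Real.log x) atTop (nhds 0) :=
    hF.div_atTop Real.tendsto_log_atTop
  have := t1.sub t2
  rw [sub_zero] at this
  apply this.congr'
  filter_upwards [eventually_gt_atTop (1:ℝ)] with x hx
  rw [hId x hx, sub_div]

private lemma aux_sqrt_atTop : Tendsto Real.sqrt atTop atTop := by
  rw [show Real.sqrt = fun x : ℝ => x ^ (1/(2:ℝ)) from funext Real.sqrt_eq_rpow]
  exact tendsto_rpow_atTop (by norm_num)

private lemma aux_keyA (ν ρ : Measure ℝ) [IsProbabilityMeasure ν] [IsProbabilityMeasure ρ]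
    {α : ℝ} (hα : 0 < α)
    (hJ : Tendsto (fun x => (∫ v in Set.Ioc 0 x, v ^ α ∂ν) / Real.log x) atTop (nhds α))
    (hG : Tendsto (fun t => (ρ (Set.Ioi t)).toReal * t ^ α) atTop (nhds 1)) :
    Tendsto (fun z => (∫⁻ v in Set.Ioc 0 (Real.sqrt z), ρ (Set.Ioi (z / v)) ∂ν).toReal /
        (α * z ^ (-α) * Real.log z)) atTop (nhds (1/2)) := by
  set J : ℝ → ℝ := fun x => ∫ v in Set.Ioc 0 x, v ^ α ∂ν with hJdef
  set r : ℝ → ℝ := fun z => (z ^ (-α) * J (Real.sqrt z)) / (α * z ^ (-α) * Real.log z) with hrdef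
  have hGmeas : Measurable (fun u : ℝ => ρ (Set.Ioi u)) :=
    Antitone.measurable (fun a b hab => measure_mono (Set.Ioi_subset_Ioi hab))
  have hrpowmeas : Measurable (fun v : ℝ => v ^ α) :=
    (Real.continuous_rpow_const hα.le).measurable
  have hr : Tendsto r atTop (nhds (1/2)) := by
    have base : Tendsto (fun z => (J (Real.sqrt z) / Real.log (Real.sqrt z)) / (2*α))
        atTop (nhds (α / (2*α))) := (hJ.comp aux_sqrt_atTop).div_const _
    have hαval : α / (2*α) = 1/2 := by field_simp
    rw [hαval] at base
    apply base.congr'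
    filter_upwards [eventually_gt_atTop (1:ℝ)] with z hz
    have hz0 : (0:ℝ) < z := lt_trans one_pos hz
    have hlz : 0 < Real.log z := Real.log_pos hz
    have hzα : (0:ℝ) < z ^ (-α) := Real.rpow_pos_of_pos hz0 _
    rw [hrdef]
    simp only
    rw [Real.log_sqrt hz0.le]
    field_simp
  apply aux_tendsto_of_squeeze hr
  intro ε hε
  obtain ⟨M, hM⟩ := eventually_atTop.mp (Metric.tendsto_nhds.mp hG ε hε)
  filter_upwards [eventually_gt_atTop (1:ℝ), aux_sqrt_atTop.eventually_ge_atTop (max M 1)]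
    with z hz1 hzM
  set x := Real.sqrt z with hxdef
  have hz0 : (0:ℝ) < z := lt_trans one_pos hz1
  have hx1 : (1:ℝ) ≤ x := le_trans (le_max_right _ _) hzM
  have hx0 : (0:ℝ) < x := lt_of_lt_of_le one_pos hx1
  have hL : 0 < Real.log z := Real.log_pos hz1
  have hzα : (0:ℝ) < z ^ (-α) := Real.rpow_pos_of_pos hz0 _
  have hD : 0 < α * z ^ (-α) * Real.log z := by positivity
  -- pointwise bounds
  have hbnd : ∀ v ∈ Set.Ioc (0:ℝ) x,
      (1 - ε) * z ^ (-α) * v ^ α ≤ (ρ (Set.Ioi (z / v))).toReal ∧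
      (ρ (Set.Ioi (z / v))).toReal ≤ (1 + ε) * z ^ (-α) * v ^ α := by
    intro v hv
    obtain ⟨hv0, hvx⟩ := hv
    have hu0 : 0 < z / v := div_pos hz0 hv0
    have hux : x ≤ z / v := by
      rw [le_div_iff₀ hv0]
      calc x * v ≤ x * x := by nlinarith
        _ = z := by rw [hxdef, Real.mul_self_sqrt hz0.le]
    have huM : M ≤ z / v := le_trans (le_trans (le_max_left _ _) hzM) hux
    have hMd := hM (z/v) huM
    rw [Real.dist_eq, abs_lt] at hMd
    have huα : 0 < (z / v) ^ α := Real.rpow_pos_of_pos hu0 _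
    have hval : ((z / v) ^ α)⁻¹ = v ^ α * z ^ (-α) := by
      rw [Real.div_rpow hz0.le hv0.le, inv_div, div_eq_mul_inv, Real.rpow_neg hz0.le]
    have hcancel : (z / v) ^ α * ((z / v) ^ α)⁻¹ = 1 := mul_inv_cancel₀ huα.ne'
    have hvα : 0 < v ^ α := Real.rpow_pos_of_pos hv0 _
    have hinv : (0:ℝ) ≤ ((z / v) ^ α)⁻¹ := inv_nonneg.mpr huα.le
    constructor
    · have h2 := mul_le_mul_of_nonneg_right (le_of_lt (by linarith [hMd.1] :
        (1 - ε) < (ρ (Set.Ioi (z / v))).toReal * (z / v) ^ α)) hinv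
      rw [mul_assoc, hcancel, mul_one, hval] at h2
      calc (1 - ε) * z ^ (-α) * v ^ α = (1 - ε) * (v ^ α * z ^ (-α)) := by ring
        _ ≤ _ := h2
    · have h2 := mul_le_mul_of_nonneg_right (le_of_lt (by linarith [hMd.2] :
        (ρ (Set.Ioi (z / v))).toReal * (z / v) ^ α < (1 + ε))) hinv
      rw [mul_assoc, hcancel, mul_one, hval] at h2
      calc (ρ (Set.Ioi (z / v))).toReal ≤ (1 + ε) * (v ^ α * z ^ (-α)) := h2
        _ = (1 + ε) * z ^ (-α) * v ^ α := by ring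
  -- integral representation
  have hAeq : (∫⁻ v in Set.Ioc 0 x, ρ (Set.Ioi (z / v)) ∂ν).toReal
      = ∫ v in Set.Ioc 0 x, (ρ (Set.Ioi (z / v))).toReal ∂ν := by
    refine (integral_toReal ?_ (ae_of_all _ fun v => measure_lt_top ρ _)).symm
    exact (hGmeas.comp (measurable_const.div measurable_id)).aemeasurable
  -- integrability
  have hgint : IntegrableOn (fun v => (ρ (Set.Ioi (z / v))).toReal) (Set.Ioc 0 x) ν := by
    apply Integrable.mono' (integrable_const 1)
      ((hGmeas.comp (measurable_const.div measurable_id)).ennreal_toReal).aestronglyMeasurable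
    refine ae_of_all _ fun v => ?_
    rw [Real.norm_eq_abs, abs_of_nonneg ENNReal.toReal_nonneg]
    simpa using ENNReal.toReal_mono ENNReal.one_ne_top (prob_le_one (μ := ρ))
  have hvint : IntegrableOn (fun v : ℝ => v ^ α) (Set.Ioc 0 x) ν := by
    apply Integrable.mono' (integrable_const (x ^ α)) hrpowmeas.aestronglyMeasurable
    rw [ae_restrict_iff' measurableSet_Ioc]
    refine ae_of_all _ fun v hv => ?_
    rw [Real.norm_eq_abs, abs_of_nonneg (Real.rpow_nonneg hv.1.le _)]
    exact Real.rpow_le_rpow hv.1.le hv.2 hα.le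
  have hcint : ∀ c : ℝ, IntegrableOn (fun v : ℝ => c * v ^ α) (Set.Ioc 0 x) ν :=
    fun c => hvint.const_mul c
  -- bounds on the integral
  have hIl : ((1 - ε) * z ^ (-α)) * J x ≤ ∫ v in Set.Ioc 0 x, (ρ (Set.Ioi (z / v))).toReal ∂ν := by
    rw [hJdef]
    simp only
    rw [← integral_const_mul]
    refine setIntegral_mono_on ?_ hgint measurableSet_Ioc fun v hv => ?_
    · simpa [mul_assoc] using hcint ((1 - ε) * z ^ (-α))
    · exact (hbnd v hv).1
  have hIu : (∫ v in Set.Ioc 0 x, (ρ (Set.Ioi (z / v))).toReal ∂ν) ≤ ((1 + ε) * z ^ (-α)) * J x := by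
    rw [hJdef]
    simp only
    rw [← integral_const_mul]
    refine setIntegral_mono_on hgint ?_ measurableSet_Ioc fun v hv => ?_
    · simpa [mul_assoc] using hcint ((1 + ε) * z ^ (-α))
    · exact (hbnd v hv).2
  rw [hAeq, hrdef]
  simp only
  constructor
  · rw [← mul_div_assoc, ← mul_assoc]
    exact (div_le_div_iff_of_pos_right hD).mpr hIl
  · rw [← mul_div_assoc, ← mul_assoc]
    exact (div_le_div_iff_of_pos_right hD).mpr hIu

/-- If V and T are independent positive random variables with
P(V > t) ~ t^{-α} and P(T > t) ~ t^{-α} for the same α > 0, then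
P(VT > z) ~ α z^{-α} log z as z → ∞. -/
theorem product_tail_critical_case
    {Ω : Type*} [MeasurableSpace Ω] (μ : Measure Ω) [IsProbabilityMeasure μ]
    (V T : Ω → ℝ) (hmV : Measurable V) (hmT : Measurable T)
    (hVpos : ∀ ω, 0 < V ω) (hTpos : ∀ ω, 0 < T ω)
    (hindep : IndepFun V T μ)
    (α : ℝ) (hα : 0 < α)
    (hV : Tendsto (fun t => (μ {ω | V ω > t}).toReal * t ^ α) atTop (nhds 1))
    (hT : Tendsto (fun t => (μ {ω | T ω > t}).toReal * t ^ α) atTop (nhds 1)) :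
    Tendsto
      (fun z => (μ {ω | V ω * T ω > z}).toReal / (α * z ^ (-α) * Real.log z))
      atTop (nhds 1) := by
  set ν := μ.map V with hνdef
  set ρ := μ.map T with hρdef
  haveI : IsProbabilityMeasure ν := Measure.isProbabilityMeasure_map hmV.aemeasurable
  haveI : IsProbabilityMeasure ρ := Measure.isProbabilityMeasure_map hmT.aemeasurable
  have hνIoi : ∀ t : ℝ, ν (Set.Ioi t) = μ {ω | V ω > t} := fun t =>
    Measure.map_apply hmV measurableSet_Ioi
  have hρIoi : ∀ t : ℝ, ρ (Set.Ioi t) = μ {ω | T ω > t} := fun t =>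
    Measure.map_apply hmT measurableSet_Ioi
  have hFν : Tendsto (fun t => (ν (Set.Ioi t)).toReal * t ^ α) atTop (nhds 1) := by
    simpa only [hνIoi] using hV
  have hGρ : Tendsto (fun t => (ρ (Set.Ioi t)).toReal * t ^ α) atTop (nhds 1) := by
    simpa only [hρIoi] using hT
  have hν0 : ν (Set.Iic 0) = 0 := by
    rw [hνdef, Measure.map_apply hmV measurableSet_Iic]
    have : V ⁻¹' Set.Iic 0 = ∅ := by
      ext ω; simp [Set.mem_preimage, (hVpos ω).not_ge]
    rw [this, measure_empty]
  have hρ0 : ρ (Set.Iic 0) = 0 := by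
    rw [hρdef, Measure.map_apply hmT measurableSet_Iic]
    have : T ⁻¹' Set.Iic 0 = ∅ := by
      ext ω; simp [Set.mem_preimage, (hTpos ω).not_ge]
    rw [this, measure_empty]
  have hmap : μ.map (fun ω => (V ω, T ω)) = ν.prod ρ :=
    (indepFun_iff_map_prod_eq_prod_map_map hmV.aemeasurable hmT.aemeasurable).mp hindep
  have hUmeas : ∀ z : ℝ, MeasurableSet {p : ℝ × ℝ | z < p.1 * p.2} := fun z =>
    measurableSet_lt measurable_const (measurable_fst.mul measurable_snd)
  have hP : ∀ z : ℝ, μ {ω | V ω * T ω > z} = (ν.prod ρ) {p : ℝ × ℝ | z < p.1 * p.2} := by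
    intro z
    rw [← hmap, Measure.map_apply (hmV.prodMk hmT) (hUmeas z)]
    rfl
  have hdecomp : ∀ z : ℝ, 1 < z →
      (ν.prod ρ) {p : ℝ × ℝ | z < p.1 * p.2}
        = (∫⁻ v in Set.Ioc 0 (Real.sqrt z), ρ (Set.Ioi (z / v)) ∂ν)
          + (∫⁻ t in Set.Ioc 0 (Real.sqrt z), ν (Set.Ioi (z / t)) ∂ρ)
          + ν (Set.Ioi (Real.sqrt z)) * ρ (Set.Ioi (Real.sqrt z)) := by
    intro z hz
    have hz0 : (0:ℝ) < z := lt_trans one_pos hz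
    set x := Real.sqrt z with hxdef
    have hx0 : (0:ℝ) < x := Real.sqrt_pos.mpr hz0
    have hxx : x * x = z := Real.mul_self_sqrt hz0.le
    set S1 : Set (ℝ × ℝ) := {p | p.1 ∈ Set.Ioc 0 x ∧ z < p.1 * p.2} with hS1def
    set S2 : Set (ℝ × ℝ) := {p | p.2 ∈ Set.Ioc 0 x ∧ z < p.1 * p.2} with hS2def
    set S3 : Set (ℝ × ℝ) := (Set.Ioi x) ×ˢ (Set.Ioi x) with hS3def
    have hS1m : MeasurableSet S1 := (measurable_fst measurableSet_Ioc).inter (hUmeas z)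
    have hS2m : MeasurableSet S2 := (measurable_snd measurableSet_Ioc).inter (hUmeas z)
    have hS3m : MeasurableSet S3 := measurableSet_Ioi.prod measurableSet_Ioi
    have hsub : S1 ∪ S2 ∪ S3 ⊆ {p : ℝ × ℝ | z < p.1 * p.2} := by
      rintro ⟨v, t⟩ hp
      rcases hp with (h1 | h2) | h3
      · exact h1.2
      · exact h2.2
      · obtain ⟨hv, ht⟩ := h3
        have : x * x < v * t := mul_lt_mul'' hv ht hx0.le hx0.le
        simpa [hxx] using this
    have hdiffsub : {p : ℝ × ℝ | z < p.1 * p.2} \ (S1 ∪ S2 ∪ S3)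
        ⊆ (Set.Iic 0 ×ˢ Set.univ) ∪ (Set.univ ×ˢ Set.Iic 0) := by
      rintro ⟨v, t⟩ ⟨hU, hno⟩
      by_contra hcon
      simp only [Set.mem_union, Set.mem_prod, Set.mem_Iic, Set.mem_univ, and_true, true_and,
        not_or] at hcon
      obtain ⟨hv0, ht0⟩ := hcon
      push_neg at hv0 ht0
      apply hno
      by_cases hvx : v ≤ x
      · exact Or.inl (Or.inl ⟨⟨hv0, hvx⟩, hU⟩)
      · by_cases htx : t ≤ x
        · exact Or.inl (Or.inr ⟨⟨ht0, htx⟩, hU⟩)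
        · exact Or.inr ⟨not_le.mp hvx, not_le.mp htx⟩
    have hnull : (ν.prod ρ) ((Set.Iic 0 ×ˢ Set.univ) ∪ (Set.univ ×ˢ Set.Iic 0)) = 0 := by
      apply measure_union_null
      · rw [Measure.prod_prod, hν0, zero_mul]
      · rw [Measure.prod_prod, hρ0, mul_zero]
    have hmeq : (ν.prod ρ) {p : ℝ × ℝ | z < p.1 * p.2} = (ν.prod ρ) (S1 ∪ S2 ∪ S3) := by
      refine le_antisymm ?_ (measure_mono hsub)
      calc (ν.prod ρ) {p : ℝ × ℝ | z < p.1 * p.2}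
          ≤ (ν.prod ρ) ((S1 ∪ S2 ∪ S3) ∪ ({p : ℝ × ℝ | z < p.1 * p.2} \ (S1 ∪ S2 ∪ S3))) := by
            refine measure_mono fun p hp => ?_
            by_cases h : p ∈ S1 ∪ S2 ∪ S3
            · exact Or.inl h
            · exact Or.inr ⟨hp, h⟩
        _ ≤ (ν.prod ρ) (S1 ∪ S2 ∪ S3)
              + (ν.prod ρ) ({p : ℝ × ℝ | z < p.1 * p.2} \ (S1 ∪ S2 ∪ S3)) := measure_union_le _ _
        _ = (ν.prod ρ) (S1 ∪ S2 ∪ S3) := by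
            rw [measure_mono_null hdiffsub hnull, add_zero]
    have hd12 : Disjoint S1 S2 := by
      rw [Set.disjoint_left]
      rintro ⟨v, t⟩ ⟨⟨hv0, hvx⟩, hU⟩ ⟨⟨ht0, htx⟩, _⟩
      have : v * t ≤ x * x := mul_le_mul hvx htx ht0.le hx0.le
      simp only [Set.mem_setOf_eq] at hU
      nlinarith
    have hd123 : Disjoint (S1 ∪ S2) S3 := by
      rw [Set.disjoint_left]
      rintro ⟨v, t⟩ hp ⟨hv, ht⟩
      rcases hp with h1 | h2
      · exact absurd h1.1.2 (not_le.mpr hv)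
      · exact absurd h2.1.2 (not_le.mpr ht)
    have hsum : (ν.prod ρ) (S1 ∪ S2 ∪ S3)
        = (ν.prod ρ) S1 + (ν.prod ρ) S2 + (ν.prod ρ) S3 := by
      rw [measure_union hd123 hS3m, measure_union hd12 hS2m]
    have hπ1 : (ν.prod ρ) S1 = ∫⁻ v in Set.Ioc 0 x, ρ (Set.Ioi (z / v)) ∂ν := by
      rw [Measure.prod_apply hS1m]
      rw [← lintegral_indicator (hs := measurableSet_Ioc)]
      refine lintegral_congr fun v => ?_
      by_cases hv : v ∈ Set.Ioc 0 x
      · rw [Set.indicator_of_mem hv]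
        congr 1
        ext t
        simp only [Set.mem_preimage, hS1def, Set.mem_setOf_eq, Set.mem_Ioi, hv, true_and]
        rw [div_lt_iff₀ hv.1, mul_comm]
      · rw [Set.indicator_of_notMem hv]
        have : Prod.mk v ⁻¹' S1 = ∅ := by
          ext t
          simp only [Set.mem_preimage, hS1def, Set.mem_setOf_eq, Set.mem_empty_iff_false,
            iff_false, not_and]
          exact fun hmem => absurd hmem hv
        rw [this, measure_empty]
    have hπ2 : (ν.prod ρ) S2 = ∫⁻ t in Set.Ioc 0 x, ν (Set.Ioi (z / t)) ∂ρ := by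
      rw [Measure.prod_apply_symm hS2m]
      rw [← lintegral_indicator (hs := measurableSet_Ioc)]
      refine lintegral_congr fun t => ?_
      by_cases ht : t ∈ Set.Ioc 0 x
      · rw [Set.indicator_of_mem ht]
        congr 1
        ext v
        simp only [Set.mem_preimage, hS2def, Set.mem_setOf_eq, Set.mem_Ioi, ht, true_and]
        rw [div_lt_iff₀ ht.1]
      · rw [Set.indicator_of_notMem ht]
        have : (fun v => (v, t)) ⁻¹' S2 = ∅ := by
          ext v
          simp only [Set.mem_preimage, hS2def, Set.mem_setOf_eq, Set.mem_empty_iff_false,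
            iff_false, not_and]
          exact fun hmem => absurd hmem ht
        rw [this, measure_empty]
    have hπ3 : (ν.prod ρ) S3 = ν (Set.Ioi x) * ρ (Set.Ioi x) := Measure.prod_prod _ _
    rw [hmeq, hsum, hπ1, hπ2, hπ3]
  -- the three limits
  have hJν := aux_keyJ ν hα hFν
  have hJρ := aux_keyJ ρ hα hGρ
  have hA := aux_keyA ν ρ hα hJν hGρ
  have hB := aux_keyA ρ ν hα hJρ hFν
  have hC : Tendsto (fun z => (ν (Set.Ioi (Real.sqrt z)) * ρ (Set.Ioi (Real.sqrt z))).toReal /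
      (α * z ^ (-α) * Real.log z)) atTop (nhds 0) := by
    have hnum : Tendsto (fun z => ((ν (Set.Ioi (Real.sqrt z))).toReal * (Real.sqrt z) ^ α) *
        ((ρ (Set.Ioi (Real.sqrt z))).toReal * (Real.sqrt z) ^ α)) atTop (nhds 1) := by
      have := (hFν.comp aux_sqrt_atTop).mul (hGρ.comp aux_sqrt_atTop)
      rw [mul_one] at this
      exact this
    have hden : Tendsto (fun z : ℝ => α * Real.log z) atTop atTop :=
      Real.tendsto_log_atTop.const_mul_atTop hα
    have hlim := hnum.div_atTop hden
    apply hlim.congr'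
    filter_upwards [eventually_gt_atTop (1:ℝ)] with z hz
    have hz0 : (0:ℝ) < z := lt_trans one_pos hz
    have hL : 0 < Real.log z := Real.log_pos hz
    have hxα : (0:ℝ) < (Real.sqrt z) ^ α := Real.rpow_pos_of_pos (Real.sqrt_pos.mpr hz0) α
    have hxz : (Real.sqrt z) ^ α * (Real.sqrt z) ^ α = z ^ α := by
      rw [← Real.mul_rpow (Real.sqrt_nonneg z) (Real.sqrt_nonneg z), Real.mul_self_sqrt hz0.le]
    have hzinv : z ^ (-α) = ((Real.sqrt z) ^ α)⁻¹ * ((Real.sqrt z) ^ α)⁻¹ := by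
      rw [Real.rpow_neg hz0.le, ← hxz, mul_inv]
    rw [ENNReal.toReal_mul, hzinv]
    field_simp
  -- combine
  have hsumlim := (hA.add hB).add hC
  rw [show (1:ℝ)/2 + 1/2 + 0 = 1 by norm_num] at hsumlim
  apply hsumlim.congr'
  filter_upwards [eventually_gt_atTop (1:ℝ)] with z hz
  have hAfin : (∫⁻ v in Set.Ioc 0 (Real.sqrt z), ρ (Set.Ioi (z / v)) ∂ν) ≠ ⊤ := by
    refine ne_top_of_le_ne_top (measure_ne_top ν (Set.Ioc 0 (Real.sqrt z))) ?_
    calc ∫⁻ v in Set.Ioc 0 (Real.sqrt z), ρ (Set.Ioi (z / v)) ∂ν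
        ≤ ∫⁻ _ in Set.Ioc 0 (Real.sqrt z), 1 ∂ν := lintegral_mono fun v => prob_le_one
      _ = ν (Set.Ioc 0 (Real.sqrt z)) := setLIntegral_one _
  have hBfin : (∫⁻ t in Set.Ioc 0 (Real.sqrt z), ν (Set.Ioi (z / t)) ∂ρ) ≠ ⊤ := by
    refine ne_top_of_le_ne_top (measure_ne_top ρ (Set.Ioc 0 (Real.sqrt z))) ?_
    calc ∫⁻ t in Set.Ioc 0 (Real.sqrt z), ν (Set.Ioi (z / t)) ∂ρ
        ≤ ∫⁻ _ in Set.Ioc 0 (Real.sqrt z), 1 ∂ρ := lintegral_mono fun v => prob_le_one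
      _ = ρ (Set.Ioc 0 (Real.sqrt z)) := setLIntegral_one _
  have hCfin : ν (Set.Ioi (Real.sqrt z)) * ρ (Set.Ioi (Real.sqrt z)) ≠ ⊤ :=
    ENNReal.mul_ne_top (measure_ne_top _ _) (measure_ne_top _ _)
  rw [hP z, hdecomp z hz, ENNReal.toReal_add (ENNReal.add_ne_top.mpr ⟨hAfin, hBfin⟩) hCfin,
    ENNReal.toReal_add hAfin hBfin, add_div, add_div]
end

section
/- Let V, T be independent positive random variables with P(V > t) ~ t^{-α} and P(T > t) ~ t^{-α} for the same α > 0. Set a_n = (n log n)^{1/α} and b_n = n^{1/α}. Then for all x, y > 0, n · P(V T > x a_n, T > y b_n) → 0 as n → ∞. (Asymptotic independence of the normalized jump length and waiting time in the critical case α = β.) -/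
open MeasureTheory ProbabilityTheory Filter

/-- Asymptotic independence of the normalized jump length and waiting time in the
critical case α = β: with a_n = (n log n)^{1/α} and b_n = n^{1/α}, for all x, y > 0,
n · P(VT > x a_n, T > y b_n) → 0. -/
theorem asymptotic_independence_critical_case
    {Ω : Type*} [MeasurableSpace Ω] (μ : Measure Ω) [IsProbabilityMeasure μ]
    (V T : Ω → ℝ) (hmV : Measurable V) (hmT : Measurable T)
    (hVpos : ∀ ω, 0 < V ω) (hTpos : ∀ ω, 0 < T ω)
    (hindep : IndepFun V T μ)
    (α : ℝ) (hα : 0 < α)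
    (hV : Tendsto (fun t => t ^ α * (μ {ω | V ω > t}).toReal) atTop (nhds 1))
    (hT : Tendsto (fun t => t ^ α * (μ {ω | T ω > t}).toReal) atTop (nhds 1))
    (x y : ℝ) (hx : 0 < x) (hy : 0 < y) :
    Tendsto
      (fun n : ℕ => (n : ℝ) *
        (μ {ω | V ω * T ω > x * ((n : ℝ) * Real.log n) ^ (1 / α) ∧
                T ω > y * (n : ℝ) ^ (1 / α)}).toReal)
      atTop (nhds 0) := by
  have hα' : α ≠ 0 := hα.ne'
  set pV : ℝ → ℝ := fun t => (μ {ω | V ω > t}).toReal with hpVdef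
  set pT : ℝ → ℝ := fun t => (μ {ω | T ω > t}).toReal with hpTdef
  set L : ℕ → ℝ := fun n => Real.log n with hLdef
  set c : ℕ → ℝ := fun n => (L n) ^ (1/(2*α)) with hcdef
  set b : ℕ → ℝ := fun n => y * (n:ℝ) ^ (1/α) with hbdef
  set d : ℕ → ℝ := fun n => x * ((n:ℝ) * L n) ^ (1/α) / c n with hddef
  -- positivity of L eventually
  have hLpos : ∀ᶠ n : ℕ in atTop, 0 < L n := by
    filter_upwards [eventually_gt_atTop 1] with n hn
    exact Real.log_pos (by exact_mod_cast hn)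
  -- arguments tend to atTop
  have hLtop : Tendsto L atTop atTop :=
    Real.tendsto_log_atTop.comp tendsto_natCast_atTop_atTop
  have hctop : Tendsto c atTop atTop :=
    (tendsto_rpow_atTop (by positivity)).comp hLtop
  have hbtop : Tendsto b atTop atTop :=
    Tendsto.const_mul_atTop hy ((tendsto_rpow_atTop (by positivity)).comp tendsto_natCast_atTop_atTop)
  have hdtop : Tendsto d atTop atTop := by
    have h1 : Tendsto (fun n : ℕ => x * (n:ℝ) ^ (1/α) * (L n) ^ (1/(2*α))) atTop atTop :=
      (Tendsto.const_mul_atTop hx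
        ((tendsto_rpow_atTop (by positivity)).comp tendsto_natCast_atTop_atTop)).atTop_mul_atTop₀
        ((tendsto_rpow_atTop (by positivity)).comp hLtop)
    refine h1.congr' ?_
    filter_upwards [hLpos, eventually_gt_atTop 0] with n hLn hn
    have hn' : (0:ℝ) ≤ (n:ℝ) := Nat.cast_nonneg n
    have hc2 : (0:ℝ) < c n := Real.rpow_pos_of_pos hLn _
    have hmerge : L n ^ ((1:ℝ)/α) = L n ^ ((1:ℝ)/(2*α)) * L n ^ ((1:ℝ)/(2*α)) := by
      rw [← Real.rpow_add hLn]
      congr 1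
      field_simp
      ring
    rw [hddef]
    simp only
    rw [Real.mul_rpow hn' hLn.le, hcdef]
    simp only
    rw [hmerge, eq_div_iff (ne_of_gt (Real.rpow_pos_of_pos hLn (1/(2*α))))]
    ring
  -- tail limits along those sequences
  have h1 : Tendsto (fun n => (c n) ^ α * pV (c n)) atTop (nhds 1) := hV.comp hctop
  have h2 : Tendsto (fun n => (b n) ^ α * pT (b n)) atTop (nhds 1) := hT.comp hbtop
  have h3 : Tendsto (fun n => (d n) ^ α * pT (d n)) atTop (nhds 1) := hT.comp hdtop
  have hz : Tendsto (fun n => (L n) ^ (-(1/2 : ℝ))) atTop (nhds 0) :=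
    (tendsto_rpow_neg_atTop (by norm_num)).comp hLtop
  -- the dominating functions
  set g : ℕ → ℝ := fun n =>
    ((c n) ^ α * pV (c n)) * ((b n) ^ α * pT (b n)) * (y ^ (-α) * (L n) ^ (-(1/2 : ℝ))) with hgdef
  set h : ℕ → ℝ := fun n =>
    ((d n) ^ α * pT (d n)) * (x ^ (-α) * (L n) ^ (-(1/2 : ℝ))) with hhdef
  have hg0 : Tendsto g atTop (nhds 0) := by
    have h0 : Tendsto g atTop (nhds (1 * 1 * (y ^ (-α) * 0))) :=
      (h1.mul h2).mul (hz.const_mul _)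
    simpa only [mul_zero, one_mul] using h0
  have hh0 : Tendsto h atTop (nhds 0) := by
    have h0 : Tendsto h atTop (nhds (1 * (x ^ (-α) * 0))) :=
      h3.mul (hz.const_mul _)
    simpa only [mul_zero, one_mul] using h0
  -- key measure inequality
  have key : ∀ᶠ n : ℕ in atTop,
      (n : ℝ) * (μ {ω | V ω * T ω > x * ((n : ℝ) * L n) ^ (1 / α) ∧
                T ω > y * (n : ℝ) ^ (1 / α)}).toReal ≤ g n + h n := by
    filter_upwards [hLpos, eventually_gt_atTop 0] with n hLn hn
    have hcn : (0:ℝ) < c n := Real.rpow_pos_of_pos hLn _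
    have hn0 : (0:ℝ) < (n:ℝ) := by exact_mod_cast hn
    -- set inclusion
    have hsub : {ω | V ω * T ω > x * ((n : ℝ) * L n) ^ (1 / α) ∧ T ω > y * (n : ℝ) ^ (1 / α)}
        ⊆ (V ⁻¹' Set.Ioi (c n) ∩ T ⁻¹' Set.Ioi (b n)) ∪ T ⁻¹' Set.Ioi (d n) := by
      rintro ω ⟨hw1, hw2⟩
      by_cases hV' : c n < V ω
      · exact Or.inl ⟨hV', hw2⟩
      · push_neg at hV'
        refine Or.inr ?_
        have hmul : V ω * T ω ≤ c n * T ω :=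
          mul_le_mul_of_nonneg_right hV' (hTpos ω).le
        have : x * ((n : ℝ) * L n) ^ (1/α) < c n * T ω := lt_of_lt_of_le hw1 hmul
        exact (div_lt_iff₀' hcn).2 this
    have hmeas : μ {ω | V ω * T ω > x * ((n : ℝ) * L n) ^ (1 / α) ∧ T ω > y * (n : ℝ) ^ (1 / α)}
        ≤ μ (V ⁻¹' Set.Ioi (c n) ∩ T ⁻¹' Set.Ioi (b n)) + μ (T ⁻¹' Set.Ioi (d n)) :=
      (measure_mono hsub).trans (measure_union_le _ _)
    have hind : μ (V ⁻¹' Set.Ioi (c n) ∩ T ⁻¹' Set.Ioi (b n))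
        = μ (V ⁻¹' Set.Ioi (c n)) * μ (T ⁻¹' Set.Ioi (b n)) :=
      hindep.measure_inter_preimage_eq_mul _ _ measurableSet_Ioi measurableSet_Ioi
    have hVset : V ⁻¹' Set.Ioi (c n) = {ω | V ω > c n} := rfl
    have hTbset : T ⁻¹' Set.Ioi (b n) = {ω | T ω > b n} := rfl
    have hTdset : T ⁻¹' Set.Ioi (d n) = {ω | T ω > d n} := rfl
    have htr : (μ {ω | V ω * T ω > x * ((n : ℝ) * L n) ^ (1 / α) ∧
        T ω > y * (n : ℝ) ^ (1 / α)}).toReal ≤ pV (c n) * pT (b n) + pT (d n) := by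
      have hne1 : μ (V ⁻¹' Set.Ioi (c n) ∩ T ⁻¹' Set.Ioi (b n)) ≠ ⊤ := measure_ne_top _ _
      have hne2 : μ (T ⁻¹' Set.Ioi (d n)) ≠ ⊤ := measure_ne_top _ _
      calc (μ _).toReal ≤ (μ (V ⁻¹' Set.Ioi (c n) ∩ T ⁻¹' Set.Ioi (b n))
            + μ (T ⁻¹' Set.Ioi (d n))).toReal :=
            ENNReal.toReal_mono (by finiteness) hmeas
        _ = pV (c n) * pT (b n) + pT (d n) := by
            rw [ENNReal.toReal_add hne1 hne2, hind, ENNReal.toReal_mul,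
              hVset, hTbset, hTdset]
    -- algebraic identities
    have hyα : (0:ℝ) < y ^ α := Real.rpow_pos_of_pos hy α
    have hxα : (0:ℝ) < x ^ α := Real.rpow_pos_of_pos hx α
    have hL2 : (0:ℝ) < (L n) ^ (1/2 : ℝ) := Real.rpow_pos_of_pos hLn _
    have ecα : (c n) ^ α = (L n) ^ (1/2 : ℝ) := by
      rw [hcdef]
      simp only
      rw [← Real.rpow_mul hLn.le]
      congr 1
      field_simp
    have enα : ((n:ℝ) ^ (1/α)) ^ α = (n:ℝ) := by
      rw [← Real.rpow_mul hn0.le, one_div, inv_mul_cancel₀ hα', Real.rpow_one]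
    have ebα : (b n) ^ α = y ^ α * (n:ℝ) := by
      rw [hbdef]
      simp only
      rw [Real.mul_rpow hy.le (by positivity), enα]
    have enLα : (((n:ℝ) * L n) ^ (1/α)) ^ α = (n:ℝ) * L n := by
      rw [← Real.rpow_mul (by positivity), one_div, inv_mul_cancel₀ hα', Real.rpow_one]
    have edα : (d n) ^ α = x ^ α * ((n:ℝ) * L n) / (L n) ^ (1/2 : ℝ) := by
      rw [hddef]
      simp only
      rw [Real.div_rpow (by positivity) hcn.le, Real.mul_rpow hx.le (by positivity),
        enLα, ecα]
    have hLsq : (L n) ^ (1/2 : ℝ) * (L n) ^ (1/2 : ℝ) = L n := by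
      rw [← Real.rpow_add hLn]; norm_num
    have idg : g n = (n:ℝ) * (pV (c n) * pT (b n)) := by
      rw [hgdef]
      simp only
      rw [ecα, ebα, Real.rpow_neg hy.le, Real.rpow_neg hLn.le]
      field_simp
    have edα' : d n ^ α = x ^ α * (n:ℝ) * (L n) ^ (1/2 : ℝ) := by
      rw [edα, div_eq_iff hL2.ne']
      linear_combination (-(x ^ α * (n:ℝ))) * hLsq
    have idh : h n = (n:ℝ) * pT (d n) := by
      rw [hhdef]
      simp only
      rw [edα', Real.rpow_neg hx.le, Real.rpow_neg hLn.le]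
      field_simp
    rw [idg, idh, ← mul_add]
    exact mul_le_mul_of_nonneg_left htr hn0.le
  -- conclude by squeezing
  refine squeeze_zero' ?_ key (by simpa using hg0.add hh0)
  filter_upwards with n
  positivity
end

section
/- Let V, T be independent positive random variables with P(V > t) ~ t^{-α} for both, and a_n = (n log n)^{1/α}. Then for every x > 0, n · P(VT > x a_n) → x^{-α} as n → ∞. In particular the sequence of i.i.d. products normalized by a_n lies in the domain of attraction of a one-sided α-stable law. -/
open MeasureTheory ProbabilityTheory Filter Set

lemma aux_ofReal_integral_le {X : Type*} [MeasurableSpace X] (μ : Measure X)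
    {g : X → ℝ} (hg : Integrable g μ) :
    ENNReal.ofReal (∫ x, g x ∂μ) ≤ ∫⁻ x, ENNReal.ofReal (g x) ∂μ := by
  have h1 : ∫ x, g x ∂μ ≤ ∫ x, max (g x) 0 ∂μ :=
    integral_mono hg hg.pos_part (fun x => le_max_left _ _)
  calc ENNReal.ofReal (∫ x, g x ∂μ) ≤ ENNReal.ofReal (∫ x, max (g x) 0 ∂μ) :=
        ENNReal.ofReal_le_ofReal h1
    _ = ∫⁻ x, ENNReal.ofReal (max (g x) 0) ∂μ :=
        ofReal_integral_eq_lintegral_ofReal hg.pos_part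
          (Eventually.of_forall fun x => le_max_right _ _)
    _ = ∫⁻ x, ENNReal.ofReal (g x) ∂μ := by
        congr 1; ext x
        rcases le_total (g x) 0 with h | h
        · simp [max_eq_right h, ENNReal.ofReal_eq_zero.2 h]
        · simp [max_eq_left h]

lemma aux_tendsto (C K : ℝ) :
    Tendsto (fun n : ℕ =>
        (C + K * (Real.log n + Real.log (Real.log n))) / Real.log n)
      atTop (nhds K) := by
  have hlog : Tendsto (fun n : ℕ => Real.log n) atTop atTop :=
    Real.tendsto_log_atTop.comp tendsto_natCast_atTop_atTop
  have hinv : Tendsto (fun n : ℕ => (Real.log n)⁻¹) atTop (nhds 0) :=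
    hlog.inv_tendsto_atTop
  have hll : Tendsto (fun n : ℕ => Real.log (Real.log n) / Real.log n) atTop (nhds 0) :=
    (Real.isLittleO_log_id_atTop.tendsto_div_nhds_zero).comp hlog
  have key : Tendsto (fun n : ℕ =>
      C * (Real.log n)⁻¹ + (K + K * (Real.log (Real.log n) / Real.log n)))
      atTop (nhds (C * 0 + (K + K * 0))) :=
    ((hinv.const_mul C)).add (tendsto_const_nhds.add (hll.const_mul K))
  have : (C * 0 + (K + K * 0)) = K := by ring
  rw [this] at key
  refine key.congr' ?_
  filter_upwards [eventually_ge_atTop 2] with n hn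
  have hn1 : (1:ℝ) < (n:ℝ) := by exact_mod_cast Nat.lt_of_lt_of_le one_lt_two hn
  have hlogn : 0 < Real.log n := Real.log_pos hn1
  field_simp

lemma aux_lint_inv (c A B : ℝ) (hc : 0 ≤ c) (hA : 0 < A) (hAB : A ≤ B) :
    ∫⁻ s in Ioc A B, ENNReal.ofReal (c * s⁻¹)
      = ENNReal.ofReal (c * (Real.log B - Real.log A)) := by
  have hB : 0 < B := hA.trans_le hAB
  have hint : IntegrableOn (fun s : ℝ => c * s⁻¹) (Ioc A B) := by
    refine (((continuousOn_const.mul (continuousOn_inv₀.mono ?_)).integrableOn_Icc)).mono_set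
      Ioc_subset_Icc_self
    intro y hy
    exact ne_of_gt (hA.trans_le hy.1)
  rw [← ofReal_integral_eq_lintegral_ofReal hint ?_]
  · congr 1
    rw [← intervalIntegral.integral_of_le hAB, intervalIntegral.integral_const_mul,
      integral_inv_of_pos hA hB, Real.log_div hB.ne' hA.ne']
  · filter_upwards [ae_restrict_mem measurableSet_Ioc] with s hs
    have : 0 < s := hA.trans hs.1
    positivity

lemma aux_K_upper (ν : Measure ℝ) [IsProbabilityMeasure ν]
    (α ε M u : ℝ) (hα : 0 < α) (hε : 0 < ε) (hM : 1 ≤ M) (hu : M ≤ u)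
    (htail : ∀ s, M ≤ s → ν (Ioi s) ≤ ENNReal.ofReal ((1 + ε) * s ^ (-α))) :
    ∫⁻ t in Ioc 0 u, ENNReal.ofReal (t ^ α) ∂ν
      ≤ ENNReal.ofReal (M ^ α + (1 + ε) * α * Real.log u) := by
  have hM0 : (0:ℝ) < M := lt_of_lt_of_le one_pos hM
  have hu0 : (0:ℝ) < u := hM0.trans_le hu
  have hmble : Measurable (fun t : ℝ => t ^ α) := (Real.continuous_rpow_const hα.le).measurable
  have hmeas_lt : ∀ s : ℝ, MeasurableSet {t : ℝ | s < t ^ α} :=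
    fun s => measurableSet_lt measurable_const hmble
  -- layer cake
  have layer : ∫⁻ t in Ioc 0 u, ENNReal.ofReal (t ^ α) ∂ν
      = ∫⁻ s in Ioi 0, (ν.restrict (Ioc 0 u)) {t | s < t ^ α} := by
    refine lintegral_eq_lintegral_meas_lt _ ?_ hmble.aemeasurable
    filter_upwards [ae_restrict_mem measurableSet_Ioc] with t ht
    exact Real.rpow_nonneg ht.1.le α
  rw [layer]
  have hsplit : Ioi (0:ℝ) = Ioc 0 (M ^ α) ∪ Ioi (M ^ α) :=
    (Ioc_union_Ioi_eq_Ioi (Real.rpow_nonneg hM0.le α)).symm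
  have hMα : (0:ℝ) < M ^ α := Real.rpow_pos_of_pos hM0 α
  rw [hsplit, lintegral_union measurableSet_Ioi Ioc_disjoint_Ioi_same]
  have h1 : ∫⁻ s in Ioc (0:ℝ) (M ^ α), (ν.restrict (Ioc 0 u)) {t | s < t ^ α}
      ≤ ENNReal.ofReal (M ^ α) := by
    calc ∫⁻ s in Ioc (0:ℝ) (M ^ α), (ν.restrict (Ioc 0 u)) {t | s < t ^ α}
        ≤ ∫⁻ _ in Ioc (0:ℝ) (M ^ α), 1 := by
          refine setLIntegral_mono' measurableSet_Ioc fun s _ => ?_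
          exact le_trans (Measure.restrict_apply_le _ _) prob_le_one
      _ = ENNReal.ofReal (M ^ α) := by
          rw [setLIntegral_one, Real.volume_Ioc, sub_zero]
  have hMu : M ^ α ≤ u ^ α := Real.rpow_le_rpow hM0.le hu hα.le
  have hsplit2 : Ioi (M ^ α) = Ioc (M ^ α) (u ^ α) ∪ Ioi (u ^ α) :=
    (Ioc_union_Ioi_eq_Ioi hMu).symm
  have hlogu : 0 ≤ Real.log u := Real.log_nonneg (hM.trans hu)
  have h2 : ∫⁻ s in Ioi (M ^ α), (ν.restrict (Ioc 0 u)) {t | s < t ^ α}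
      ≤ ENNReal.ofReal ((1 + ε) * α * Real.log u) := by
    rw [hsplit2, lintegral_union measurableSet_Ioi Ioc_disjoint_Ioi_same]
    have hz : ∫⁻ s in Ioi (u ^ α), (ν.restrict (Ioc 0 u)) {t | s < t ^ α} = 0 := by
      refine le_antisymm ?_ (by simp)
      refine le_of_le_of_eq (setLIntegral_mono' measurableSet_Ioi
        (fun s hs => le_of_eq ?_)) lintegral_zero
      rw [Measure.restrict_apply (hmeas_lt s)]
      have hempty : {t : ℝ | s < t ^ α} ∩ Ioc 0 u = (∅ : Set ℝ) := by
        ext t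
        simp only [mem_inter_iff, mem_setOf_eq, mem_Ioc, mem_empty_iff_false, iff_false]
        rintro ⟨hst, ht0, htu⟩
        exact absurd (hst.trans_le (Real.rpow_le_rpow ht0.le htu hα.le)) (not_lt.2 hs.le)
      rw [hempty, measure_empty]
    have hm : ∫⁻ s in Ioc (M ^ α) (u ^ α), (ν.restrict (Ioc 0 u)) {t | s < t ^ α}
        ≤ ∫⁻ s in Ioc (M ^ α) (u ^ α), ENNReal.ofReal ((1 + ε) * s⁻¹) := by
      refine setLIntegral_mono' measurableSet_Ioc fun s hs => ?_
      have hs0 : (0:ℝ) < s := hMα.trans hs.1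
      have hsub : {t : ℝ | s < t ^ α} ∩ Ioc 0 u ⊆ Ioi (s ^ α⁻¹) := by
        rintro t ⟨hst, ht0, _⟩
        exact (Real.rpow_inv_lt_iff_of_pos hs0.le ht0.le hα).2 hst
      have hMs : M ≤ s ^ α⁻¹ := by
        have := Real.rpow_le_rpow hMα.le hs.1.le (inv_nonneg.2 hα.le)
        rwa [Real.rpow_rpow_inv hM0.le hα.ne'] at this
      have htl := htail _ hMs
      have heq : ((s : ℝ) ^ α⁻¹) ^ (-α) = s⁻¹ := by
        rw [← Real.rpow_mul hs0.le]
        have : α⁻¹ * (-α) = -1 := by field_simp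
        rw [this, Real.rpow_neg_one]
      rw [heq] at htl
      rw [Measure.restrict_apply (hmeas_lt s)]
      exact le_trans (measure_mono hsub) htl
    have hcomp := aux_lint_inv (1 + ε) (M ^ α) (u ^ α) (by linarith) hMα hMu
    rw [hz, add_zero]
    refine le_trans hm ?_
    rw [hcomp]
    refine ENNReal.ofReal_le_ofReal ?_
    rw [Real.log_rpow hu0, Real.log_rpow hM0]
    have hlogM : 0 ≤ Real.log M := Real.log_nonneg hM
    nlinarith [mul_nonneg (mul_nonneg (by linarith : (0:ℝ) ≤ 1 + ε) hα.le) hlogM]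
  refine le_trans (add_le_add h1 h2) (le_of_eq ?_)
  rw [← ENNReal.ofReal_add (Real.rpow_nonneg hM0.le α) (by positivity)]

lemma aux_K_lower (ν : Measure ℝ) [IsProbabilityMeasure ν]
    (α ε M u : ℝ) (hα : 0 < α) (hε : 0 < ε) (hε1 : ε < 1) (hM : 1 ≤ M) (hu : M ≤ u)
    (hlow : ∀ s, M ≤ s → ENNReal.ofReal ((1 - ε) * s ^ (-α)) ≤ ν (Ioi s))
    (hup : ∀ s, M ≤ s → ν (Ioi s) ≤ ENNReal.ofReal ((1 + ε) * s ^ (-α))) :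
    ENNReal.ofReal ((1 - ε) * α * Real.log u - (1 - ε) * α * Real.log M - (1 + ε))
      ≤ ∫⁻ t in Ioc M u, ENNReal.ofReal (t ^ α) ∂ν := by
  have hM0 : (0:ℝ) < M := lt_of_lt_of_le one_pos hM
  have hu0 : (0:ℝ) < u := hM0.trans_le hu
  have hMα : (0:ℝ) < M ^ α := Real.rpow_pos_of_pos hM0 α
  have huα : (0:ℝ) < u ^ α := Real.rpow_pos_of_pos hu0 α
  have hMu : M ^ α ≤ u ^ α := Real.rpow_le_rpow hM0.le hu hα.le
  have hmble : Measurable (fun t : ℝ => t ^ α) := (Real.continuous_rpow_const hα.le).measurable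
  have hmeas_lt : ∀ s : ℝ, MeasurableSet {t : ℝ | s < t ^ α} :=
    fun s => measurableSet_lt measurable_const hmble
  have layer : ∫⁻ t in Ioc M u, ENNReal.ofReal (t ^ α) ∂ν
      = ∫⁻ s in Ioi 0, (ν.restrict (Ioc M u)) {t | s < t ^ α} := by
    refine lintegral_eq_lintegral_meas_lt _ ?_ hmble.aemeasurable
    filter_upwards [ae_restrict_mem measurableSet_Ioc] with t ht
    exact Real.rpow_nonneg (hM0.trans ht.1).le α
  rw [layer]
  -- restrict to the interval (M^α, u^α]
  have hmono : ∫⁻ s in Ioc (M ^ α) (u ^ α), (ν.restrict (Ioc M u)) {t | s < t ^ α}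
      ≤ ∫⁻ s in Ioi 0, (ν.restrict (Ioc M u)) {t | s < t ^ α} :=
    lintegral_mono_set (fun s hs => hMα.trans hs.1)
  refine le_trans ?_ hmono
  -- pointwise lower bound
  set g : ℝ → ℝ := fun s => (1 - ε) * s⁻¹ - (1 + ε) * u ^ (-α) with hg
  have hpt : ∀ s ∈ Ioc (M ^ α) (u ^ α),
      ENNReal.ofReal (g s) ≤ (ν.restrict (Ioc M u)) {t | s < t ^ α} := by
    intro s hs
    have hs0 : (0:ℝ) < s := hMα.trans hs.1
    set a : ℝ := s ^ α⁻¹ with ha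
    have haM : M < a := by
      have := Real.rpow_lt_rpow hMα.le hs.1 (inv_pos.2 hα)
      rwa [Real.rpow_rpow_inv hM0.le hα.ne'] at this
    have hau : a ≤ u := by
      have := Real.rpow_le_rpow hs0.le hs.2 (inv_nonneg.2 hα.le)
      rwa [Real.rpow_rpow_inv hu0.le hα.ne'] at this
    have hsub : Ioc a u ⊆ {t : ℝ | s < t ^ α} ∩ Ioc M u := by
      rintro t ⟨hat, htu⟩
      refine ⟨?_, haM.trans hat, htu⟩
      exact (Real.rpow_inv_lt_iff_of_pos hs0.le (((hM0.trans haM).trans hat).le) hα).1 hat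
    have hdiff : Ioc a u = Ioi a \ Ioi u := by
      rw [Set.Ioi_diff_Ioi]
    have hν_Ioc : ν (Ioc a u) = ν (Ioi a) - ν (Ioi u) := by
      rw [hdiff, measure_diff (Ioi_subset_Ioi hau) measurableSet_Ioi.nullMeasurableSet
        (measure_ne_top _ _)]
    have haα : a ^ (-α) = s⁻¹ := by
      rw [← Real.rpow_mul hs0.le]
      have : α⁻¹ * (-α) = -1 := by field_simp
      rw [this, Real.rpow_neg_one]
    have hlo := hlow a haM.le
    rw [haα] at hlo
    have hhi := hup u hu
    have key : ENNReal.ofReal (g s) ≤ ν (Ioc a u) := by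
      rw [hν_Ioc, hg]
      calc ENNReal.ofReal ((1 - ε) * s⁻¹ - (1 + ε) * u ^ (-α))
          = ENNReal.ofReal ((1 - ε) * s⁻¹) - ENNReal.ofReal ((1 + ε) * u ^ (-α)) :=
            ENNReal.ofReal_sub _ (by positivity)
        _ ≤ ν (Ioi a) - ν (Ioi u) := tsub_le_tsub hlo hhi
    refine le_trans key ?_
    rw [Measure.restrict_apply (hmeas_lt s)]
    exact measure_mono hsub
  refine le_trans ?_ (setLIntegral_mono' measurableSet_Ioc hpt)
  -- compute the real integral of g
  have hint_inv : IntegrableOn (fun s : ℝ => (1 - ε) * s⁻¹) (Ioc (M ^ α) (u ^ α)) := by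
    refine (((continuousOn_const.mul (continuousOn_inv₀.mono ?_)).integrableOn_Icc)).mono_set
      Ioc_subset_Icc_self
    intro y hy
    exact ne_of_gt (hMα.trans_le hy.1)
  have hint_c : IntegrableOn (fun _ : ℝ => (1 + ε) * u ^ (-α)) (Ioc (M ^ α) (u ^ α)) :=
    integrableOn_const measure_Ioc_lt_top.ne
  have hint : IntegrableOn g (Ioc (M ^ α) (u ^ α)) := hint_inv.sub hint_c
  refine le_trans ?_ (aux_ofReal_integral_le _ hint)
  refine ENNReal.ofReal_le_ofReal ?_
  have hIg : ∫ s in Ioc (M ^ α) (u ^ α), g s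
      = (1 - ε) * (Real.log (u ^ α) - Real.log (M ^ α))
        - (1 + ε) * u ^ (-α) * (u ^ α - M ^ α) := by
    rw [hg]
    rw [integral_sub hint_inv hint_c]
    congr 1
    · rw [← intervalIntegral.integral_of_le hMu, intervalIntegral.integral_const_mul,
        integral_inv_of_pos hMα huα, Real.log_div huα.ne' hMα.ne']
    · rw [setIntegral_const, Real.volume_real_Ioc_of_le hMu, smul_eq_mul]
      ring
  rw [hIg, Real.log_rpow hu0, Real.log_rpow hM0]
  have h1 : u ^ (-α) * u ^ α = 1 := by
    rw [Real.rpow_neg hu0.le]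
    field_simp
  have h2 : 0 ≤ u ^ (-α) * M ^ α := by positivity
  nlinarith

lemma aux_tail (ρ : Measure ℝ) [IsProbabilityMeasure ρ] (α ε : ℝ) (hα : 0 < α) (hε : 0 < ε)
    (h : Tendsto (fun t : ℝ => t ^ α * (ρ (Ioi t)).toReal) atTop (nhds 1)) :
    ∃ M : ℝ, 1 ≤ M ∧ ∀ s, M ≤ s →
      ENNReal.ofReal ((1 - ε) * s ^ (-α)) ≤ ρ (Ioi s) ∧
      ρ (Ioi s) ≤ ENNReal.ofReal ((1 + ε) * s ^ (-α)) := by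
  have hev : ∀ᶠ t in atTop, |t ^ α * (ρ (Ioi t)).toReal - 1| < ε := by
    have := Metric.tendsto_nhds.mp h ε hε
    simpa [Real.dist_eq] using this
  obtain ⟨M₀, hM₀⟩ := eventually_atTop.mp hev
  refine ⟨max M₀ 1, le_max_right _ _, fun s hs => ?_⟩
  have hs1 : (1:ℝ) ≤ s := le_trans (le_max_right _ _) hs
  have hs0 : (0:ℝ) < s := lt_of_lt_of_le one_pos hs1
  have habs := abs_lt.mp (hM₀ s (le_trans (le_max_left _ _) hs))
  set G : ℝ := (ρ (Ioi s)).toReal with hG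
  have hGnn : 0 ≤ G := ENNReal.toReal_nonneg
  have hA : (0:ℝ) < s ^ (-α) := Real.rpow_pos_of_pos hs0 _
  have hinv : s ^ α * s ^ (-α) = 1 := by
    rw [← Real.rpow_add hs0]
    simp
  have hρG : ρ (Ioi s) = ENNReal.ofReal G := (ENNReal.ofReal_toReal (measure_ne_top _ _)).symm
  constructor
  · rw [hρG]
    refine ENNReal.ofReal_le_ofReal ?_
    have hB : 1 - ε ≤ s ^ α * G := by linarith [habs.1]
    calc (1 - ε) * s ^ (-α) ≤ (s ^ α * G) * s ^ (-α) :=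
          mul_le_mul_of_nonneg_right hB hA.le
      _ = G * (s ^ α * s ^ (-α)) := by ring
      _ = G := by rw [hinv, mul_one]
  · rw [hρG]
    refine ENNReal.ofReal_le_ofReal ?_
    have hB : s ^ α * G ≤ 1 + ε := by linarith [habs.2]
    calc G = (s ^ α * G) * s ^ (-α) := by
          rw [show (s ^ α * G) * s ^ (-α) = G * (s ^ α * s ^ (-α)) by ring, hinv, mul_one]
      _ ≤ (1 + ε) * s ^ (-α) := mul_le_mul_of_nonneg_right hB hA.le

lemma aux_prod_bound (ρ ν : Measure ℝ) [IsProbabilityMeasure ρ] [IsProbabilityMeasure ν]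
    (hρ0 : ρ (Iic 0) = 0)
    (α ε M : ℝ) (hα : 0 < α) (hε : 0 < ε) (hε1 : ε < 1) (hM : 1 ≤ M)
    (hρlow : ∀ s, M ≤ s → ENNReal.ofReal ((1 - ε) * s ^ (-α)) ≤ ρ (Ioi s))
    (hρup : ∀ s, M ≤ s → ρ (Ioi s) ≤ ENNReal.ofReal ((1 + ε) * s ^ (-α)))
    (hνlow : ∀ s, M ≤ s → ENNReal.ofReal ((1 - ε) * s ^ (-α)) ≤ ν (Ioi s))
    (hνup : ∀ s, M ≤ s → ν (Ioi s) ≤ ENNReal.ofReal ((1 + ε) * s ^ (-α))) :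
    ∃ C : ℝ, 0 ≤ C ∧ ∀ z, M ^ 2 ≤ z →
      ((ρ.prod ν) {p : ℝ × ℝ | p.1 * p.2 > z}).toReal
          ≤ z ^ (-α) * (C + (1 + ε) ^ 2 * α * Real.log z) ∧
      z ^ (-α) * ((1 - ε) ^ 2 * α * Real.log z - C)
          ≤ ((ρ.prod ν) {p : ℝ × ℝ | p.1 * p.2 > z}).toReal := by
  have hM0 : (0:ℝ) < M := lt_of_lt_of_le one_pos hM
  have hMα0 : (0:ℝ) ≤ M ^ α := (Real.rpow_pos_of_pos hM0 α).le
  have hlogM : 0 ≤ Real.log M := Real.log_nonneg hM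
  refine ⟨2 * (1 + ε) * M ^ α + 2 * α * Real.log M + 2, by positivity, ?_⟩
  intro z hz
  have hz1 : (1:ℝ) ≤ z := le_trans (by nlinarith : (1:ℝ) ≤ M ^ 2) hz
  have hz0 : (0:ℝ) < z := lt_of_lt_of_le one_pos hz1
  have hlogz : 0 ≤ Real.log z := Real.log_nonneg hz1
  have hzα0 : (0:ℝ) ≤ z ^ (-α) := (Real.rpow_pos_of_pos hz0 _).le
  set u : ℝ := z / M with hu_def
  have hu0 : 0 < u := div_pos hz0 hM0
  have hMu : M ≤ u := (le_div_iff₀ hM0).2 (by nlinarith)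
  have huz : u ≤ z := div_le_self hz0.le hM
  have hlogu : Real.log u = Real.log z - Real.log M := Real.log_div hz0.ne' hM0.ne'
  -- basic measurability
  have hS : MeasurableSet {p : ℝ × ℝ | p.1 * p.2 > z} :=
    measurableSet_lt measurable_const (measurable_fst.mul measurable_snd)
  have hkey : (ρ.prod ν) {p : ℝ × ℝ | p.1 * p.2 > z}
      = ∫⁻ v, ν {t | v * t > z} ∂ρ := Measure.prod_apply hS
  have hfm : Measurable (fun v : ℝ => ν {t | v * t > z}) :=
    measurable_measure_prodMk_left hS
  have hmble : Measurable (fun t : ℝ => t ^ α) := (Real.continuous_rpow_const hα.le).measurable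
  -- for positive v, the section is a tail interval
  have hsec : ∀ v : ℝ, 0 < v → {t : ℝ | v * t > z} = Ioi (z / v) := by
    intro v hv
    ext t
    simp only [mem_setOf_eq, mem_Ioi, gt_iff_lt]
    rw [div_lt_iff₀ hv, mul_comm]
  have hMzv : ∀ v : ℝ, 0 < v → v ≤ u → M ≤ z / v := by
    intro v hv hvu
    have h1 : z / u ≤ z / v := div_le_div_of_nonneg_left hz0.le hv hvu
    have h2 : z / u = M := by
      rw [hu_def]
      field_simp
    linarith
  have hdivrpow : ∀ v : ℝ, 0 < v → (z / v) ^ (-α) = z ^ (-α) * v ^ α := by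
    intro v hv
    rw [Real.div_rpow hz0.le hv.le, div_eq_mul_inv, Real.rpow_neg hv.le, inv_inv]
  -- ===== upper bound =====
  have hupper : ((ρ.prod ν) {p : ℝ × ℝ | p.1 * p.2 > z}).toReal
      ≤ z ^ (-α) * ((2 * (1 + ε) * M ^ α + 2 * α * Real.log M + 2)
          + (1 + ε) ^ 2 * α * Real.log z) := by
    have hsplit : ∫⁻ v, ν {t | v * t > z} ∂ρ
        = (∫⁻ v in Iic u, ν {t | v * t > z} ∂ρ)
          + ∫⁻ v in Ioi u, ν {t | v * t > z} ∂ρ := by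
      rw [← Set.compl_Iic]
      exact (lintegral_add_compl _ measurableSet_Iic).symm
    have htail : ∫⁻ v in Ioi u, ν {t | v * t > z} ∂ρ
        ≤ ENNReal.ofReal ((1 + ε) * (z ^ (-α) * M ^ α)) := by
      calc ∫⁻ v in Ioi u, ν {t | v * t > z} ∂ρ
          ≤ ∫⁻ _ in Ioi u, 1 ∂ρ :=
            setLIntegral_mono' measurableSet_Ioi fun v _ => prob_le_one
        _ = ρ (Ioi u) := setLIntegral_one _
        _ ≤ ENNReal.ofReal ((1 + ε) * u ^ (-α)) := hρup u hMu
        _ = ENNReal.ofReal ((1 + ε) * (z ^ (-α) * M ^ α)) := by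
            rw [hu_def, Real.div_rpow hz0.le hM0.le, div_eq_mul_inv,
              Real.rpow_neg hM0.le, inv_inv]
    have hcongr : ∫⁻ v in Iic u, ν {t | v * t > z} ∂ρ
        = ∫⁻ v in Ioc 0 u, ν {t | v * t > z} ∂ρ := by
      refine setLIntegral_congr ?_
      rw [MeasureTheory.ae_eq_set]
      constructor
      · refine measure_mono_null (fun t ht => ?_) hρ0
        simp only [mem_diff, mem_Iic, mem_Ioc, not_and] at ht ⊢
        rcases le_or_gt t 0 with h | h
        · exact h
        · exact absurd (ht.2 h) (not_not.2 ht.1)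
      · exact measure_mono_null (fun t ht => (ht.2 ht.1.2).elim) hρ0
    have hmain : ∫⁻ v in Ioc 0 u, ν {t | v * t > z} ∂ρ
        ≤ ENNReal.ofReal ((1 + ε) * z ^ (-α))
            * ENNReal.ofReal (M ^ α + (1 + ε) * α * Real.log u) := by
      have hpt : ∀ v ∈ Ioc (0:ℝ) u, ν {t | v * t > z}
          ≤ ENNReal.ofReal ((1 + ε) * z ^ (-α)) * ENNReal.ofReal (v ^ α) := by
        intro v hv
        rw [hsec v hv.1]
        refine le_trans (hνup _ (hMzv v hv.1 hv.2)) (le_of_eq ?_)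
        rw [hdivrpow v hv.1, ← ENNReal.ofReal_mul (by positivity), ← mul_assoc]
      calc ∫⁻ v in Ioc 0 u, ν {t | v * t > z} ∂ρ
          ≤ ∫⁻ v in Ioc 0 u, ENNReal.ofReal ((1 + ε) * z ^ (-α))
              * ENNReal.ofReal (v ^ α) ∂ρ := setLIntegral_mono' measurableSet_Ioc hpt
        _ = ENNReal.ofReal ((1 + ε) * z ^ (-α))
              * ∫⁻ v in Ioc 0 u, ENNReal.ofReal (v ^ α) ∂ρ :=
            lintegral_const_mul _ hmble.ennreal_ofReal
        _ ≤ ENNReal.ofReal ((1 + ε) * z ^ (-α))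
              * ENNReal.ofReal (M ^ α + (1 + ε) * α * Real.log u) := by
            exact mul_le_mul_right (aux_K_upper ρ α ε M u hα hε hM hMu hρup) _
    have htotal : (ρ.prod ν) {p : ℝ × ℝ | p.1 * p.2 > z}
        ≤ ENNReal.ofReal ((1 + ε) * z ^ (-α) * (M ^ α + (1 + ε) * α * Real.log u)
            + (1 + ε) * (z ^ (-α) * M ^ α)) := by
      rw [hkey, hsplit]
      have : ENNReal.ofReal ((1 + ε) * z ^ (-α) * (M ^ α + (1 + ε) * α * Real.log u)
            + (1 + ε) * (z ^ (-α) * M ^ α))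
          = ENNReal.ofReal ((1 + ε) * z ^ (-α) * (M ^ α + (1 + ε) * α * Real.log u))
            + ENNReal.ofReal ((1 + ε) * (z ^ (-α) * M ^ α)) := by
        rw [← ENNReal.ofReal_add ?ha ?hb]
        case ha =>
          have h1 : 0 ≤ Real.log u := Real.log_nonneg (hM.trans hMu)
          positivity
        case hb => positivity
      rw [this]
      refine add_le_add ?_ htail
      rw [hcongr]
      refine le_trans hmain (le_of_eq ?_)
      rw [← ENNReal.ofReal_mul (by positivity)]
    refine le_trans (ENNReal.toReal_mono ENNReal.ofReal_ne_top htotal) ?_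
    rw [ENNReal.toReal_ofReal ?hnn]
    case hnn =>
      have h1 : 0 ≤ Real.log u := Real.log_nonneg (hM.trans hMu)
      positivity
    have hloguz : Real.log u ≤ Real.log z := Real.log_le_log hu0 huz
    have h1 : 0 ≤ Real.log u := Real.log_nonneg (hM.trans hMu)
    nlinarith [mul_nonneg hzα0 hMα0, mul_nonneg hzα0 hlogz, mul_nonneg hzα0 h1,
      mul_nonneg (mul_nonneg hzα0 hα.le) hlogM,
      mul_le_mul_of_nonneg_left hloguz (by positivity : (0:ℝ) ≤ (1+ε)^2 * α * z ^ (-α))]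
  refine ⟨hupper, ?_⟩
  -- ===== lower bound =====
  set W : ℝ := (1 - ε) * α * Real.log u - (1 - ε) * α * Real.log M - (1 + ε) with hW
  have hge : ∫⁻ v in Ioc M u, ν {t | v * t > z} ∂ρ
      ≤ (ρ.prod ν) {p : ℝ × ℝ | p.1 * p.2 > z} := by
    rw [hkey]
    exact setLIntegral_le_lintegral _ _
  have hpt : ∀ v ∈ Ioc M u, ENNReal.ofReal ((1 - ε) * z ^ (-α)) * ENNReal.ofReal (v ^ α)
      ≤ ν {t | v * t > z} := by
    intro v hv
    have hv0 : 0 < v := hM0.trans hv.1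
    rw [hsec v hv0]
    refine le_trans (le_of_eq ?_) (hνlow _ (hMzv v hv0 hv.2))
    rw [hdivrpow v hv0, ← ENNReal.ofReal_mul (mul_nonneg (by linarith) hzα0), ← mul_assoc]
  have hchain : ENNReal.ofReal ((1 - ε) * z ^ (-α)) * ENNReal.ofReal W
      ≤ (ρ.prod ν) {p : ℝ × ℝ | p.1 * p.2 > z} := by
    calc ENNReal.ofReal ((1 - ε) * z ^ (-α)) * ENNReal.ofReal W
        ≤ ENNReal.ofReal ((1 - ε) * z ^ (-α))
            * ∫⁻ v in Ioc M u, ENNReal.ofReal (v ^ α) ∂ρ :=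
          mul_le_mul_right (aux_K_lower ρ α ε M u hα hε hε1 hM hMu hρlow hρup) _
      _ = ∫⁻ v in Ioc M u, ENNReal.ofReal ((1 - ε) * z ^ (-α))
            * ENNReal.ofReal (v ^ α) ∂ρ :=
          (lintegral_const_mul _ hmble.ennreal_ofReal).symm
      _ ≤ ∫⁻ v in Ioc M u, ν {t | v * t > z} ∂ρ :=
          setLIntegral_mono' measurableSet_Ioc hpt
      _ ≤ _ := hge
  have hfin : ENNReal.ofReal ((1 - ε) * z ^ (-α) * W)
      ≤ (ρ.prod ν) {p : ℝ × ℝ | p.1 * p.2 > z} := by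
    rwa [ENNReal.ofReal_mul (mul_nonneg (by linarith) hzα0)]
  have h2 : (1 - ε) * z ^ (-α) * W
      ≤ ((ρ.prod ν) {p : ℝ × ℝ | p.1 * p.2 > z}).toReal := by
    rcases le_or_gt ((1 - ε) * z ^ (-α) * W) 0 with h | h
    · exact h.trans ENNReal.toReal_nonneg
    · calc (1 - ε) * z ^ (-α) * W
          = (ENNReal.ofReal ((1 - ε) * z ^ (-α) * W)).toReal :=
            (ENNReal.toReal_ofReal h.le).symm
        _ ≤ _ := ENNReal.toReal_mono (measure_ne_top _ _) hfin
  refine le_trans ?_ h2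
  rw [hW, hlogu]
  nlinarith [mul_nonneg hzα0 hMα0, mul_nonneg hzα0 hlogz,
    mul_nonneg (mul_nonneg hzα0 hα.le) hlogM,
    mul_nonneg (mul_nonneg (mul_nonneg hε.le hzα0) hα.le) hlogM,
    mul_nonneg (mul_nonneg (mul_nonneg (mul_nonneg hε.le hε.le) hzα0) hα.le) hlogM,
    sq_nonneg ε, mul_nonneg hε.le hε.le]

/-- In the critical case, with a_n = (n log n)^{1/α}, for every x > 0 we have
n · P(VT > x a_n) → x^{-α}, so the i.i.d. products normalized by a_n lie in the
domain of attraction of a one-sided α-stable law. -/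
theorem critical_normalization_limit
    {Ω : Type*} [MeasurableSpace Ω] (μ : Measure Ω) [IsProbabilityMeasure μ]
    (V T : Ω → ℝ) (hmV : Measurable V) (hmT : Measurable T)
    (hVpos : ∀ ω, 0 < V ω) (hTpos : ∀ ω, 0 < T ω)
    (hindep : IndepFun V T μ)
    (α : ℝ) (hα : 0 < α) (hα1 : α < 1)
    (hV : Tendsto (fun t => t ^ α * (μ {ω | V ω > t}).toReal) atTop (nhds 1))
    (hT : Tendsto (fun t => t ^ α * (μ {ω | T ω > t}).toReal) atTop (nhds 1))
    (x : ℝ) (hx : 0 < x) :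
    Tendsto
      (fun n : ℕ => (n : ℝ) *
        (μ {ω | V ω * T ω > x * ((n : ℝ) * Real.log n) ^ (1 / α)}).toReal)
      atTop (nhds (x ^ (-α))) := by
  set ρ : Measure ℝ := μ.map V with hρdef
  set ν : Measure ℝ := μ.map T with hνdef
  haveI : IsProbabilityMeasure ρ := Measure.isProbabilityMeasure_map hmV.aemeasurable
  haveI : IsProbabilityMeasure ν := Measure.isProbabilityMeasure_map hmT.aemeasurable
  have hmap : μ.map (fun ω => (V ω, T ω)) = ρ.prod ν :=
    (ProbabilityTheory.indepFun_iff_map_prod_eq_prod_map_map hmV.aemeasurable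
      hmT.aemeasurable).mp hindep
  have hPeq : ∀ z : ℝ, μ {ω | V ω * T ω > z} = (ρ.prod ν) {p : ℝ × ℝ | p.1 * p.2 > z} := by
    intro z
    have hS : MeasurableSet {p : ℝ × ℝ | p.1 * p.2 > z} :=
      measurableSet_lt measurable_const (measurable_fst.mul measurable_snd)
    rw [← hmap, Measure.map_apply (hmV.prodMk hmT) hS]
    rfl
  have hρ0 : ρ (Iic 0) = 0 := by
    rw [hρdef, Measure.map_apply hmV measurableSet_Iic]
    have : V ⁻¹' Iic 0 = (∅ : Set Ω) := by
      ext ω; simp [not_le.2 (hVpos ω)]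
    rw [this, measure_empty]
  have hρIoi : ∀ s : ℝ, ρ (Ioi s) = μ {ω | V ω > s} := fun s =>
    Measure.map_apply hmV measurableSet_Ioi
  have hνIoi : ∀ s : ℝ, ν (Ioi s) = μ {ω | T ω > s} := fun s =>
    Measure.map_apply hmT measurableSet_Ioi
  have hVρ : Tendsto (fun t : ℝ => t ^ α * (ρ (Ioi t)).toReal) atTop (nhds 1) := by
    refine hV.congr fun t => ?_
    rw [hρIoi t]
  have hTν : Tendsto (fun t : ℝ => t ^ α * (ν (Ioi t)).toReal) atTop (nhds 1) := by
    refine hT.congr fun t => ?_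
    rw [hνIoi t]
  have hxα : (0:ℝ) < x ^ (-α) := Real.rpow_pos_of_pos hx _
  -- a_n → ∞
  have hz_tendsto : Tendsto (fun n : ℕ => x * ((n : ℝ) * Real.log n) ^ (1 / α)) atTop atTop := by
    have h1 : Tendsto (fun n : ℕ => (n : ℝ) * Real.log n) atTop atTop :=
      tendsto_natCast_atTop_atTop.atTop_mul_atTop₀
        (Real.tendsto_log_atTop.comp tendsto_natCast_atTop_atTop)
    exact ((tendsto_rpow_atTop (by positivity : (0:ℝ) < 1 / α)).comp h1).const_mul_atTop hx
  -- the common quantitative step, given ε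
  have main : ∀ ε : ℝ, 0 < ε → ε < 1 → ∃ C : ℝ, 0 ≤ C ∧
      ∀ᶠ n : ℕ in atTop,
        ((n : ℝ) * (μ {ω | V ω * T ω > x * ((n : ℝ) * Real.log n) ^ (1 / α)}).toReal
          ≤ x ^ (-α) * ((C + (1 + ε) ^ 2 * α * Real.log x
              + (1 + ε) ^ 2 * (Real.log n + Real.log (Real.log n))) / Real.log n)) ∧
        (x ^ (-α) * ((-C + (1 - ε) ^ 2 * α * Real.log x
              + (1 - ε) ^ 2 * (Real.log n + Real.log (Real.log n))) / Real.log n)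
          ≤ (n : ℝ) * (μ {ω | V ω * T ω > x * ((n : ℝ) * Real.log n) ^ (1 / α)}).toReal) := by
    intro ε hε hε1
    obtain ⟨M₁, hM₁1, hM₁⟩ := aux_tail ρ α ε hα hε hVρ
    obtain ⟨M₂, hM₂1, hM₂⟩ := aux_tail ν α ε hα hε hTν
    set M : ℝ := max M₁ M₂ with hMdef
    have hM1 : 1 ≤ M := le_trans hM₁1 (le_max_left _ _)
    obtain ⟨C, hC0, hbound⟩ := aux_prod_bound ρ ν hρ0 α ε M hα hε hε1 hM1
      (fun s hs => (hM₁ s (le_trans (le_max_left _ _) hs)).1)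
      (fun s hs => (hM₁ s (le_trans (le_max_left _ _) hs)).2)
      (fun s hs => (hM₂ s (le_trans (le_max_right _ _) hs)).1)
      (fun s hs => (hM₂ s (le_trans (le_max_right _ _) hs)).2)
    refine ⟨C, hC0, ?_⟩
    filter_upwards [hz_tendsto.eventually_ge_atTop (M ^ 2), eventually_ge_atTop 3]
      with n hzM hn3
    set z : ℝ := x * ((n : ℝ) * Real.log n) ^ (1 / α) with hzdef
    have hn0 : (0:ℝ) < (n:ℝ) := by exact_mod_cast Nat.lt_of_lt_of_le (by norm_num) hn3
    have hL1 : (1:ℝ) < Real.log n := by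
      have h3 : Real.exp 1 < 3 := lt_trans Real.exp_one_lt_d9 (by norm_num)
      have : Real.exp 1 < (n:ℝ) := lt_of_lt_of_le h3 (by exact_mod_cast hn3)
      calc (1:ℝ) = Real.log (Real.exp 1) := (Real.log_exp 1).symm
        _ < Real.log n := Real.log_lt_log (Real.exp_pos 1) this
    have hL0 : (0:ℝ) < Real.log n := lt_trans one_pos hL1
    have hnL : (0:ℝ) < (n:ℝ) * Real.log n := mul_pos hn0 hL0
    have hw0 : (0:ℝ) < ((n : ℝ) * Real.log n) ^ (1 / α) := Real.rpow_pos_of_pos hnL _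
    have hz0 : (0:ℝ) < z := mul_pos hx hw0
    -- z^{-α} = x^{-α} * (n log n)⁻¹
    have hzα : z ^ (-α) = x ^ (-α) * ((n:ℝ) * Real.log n)⁻¹ := by
      rw [hzdef, Real.mul_rpow hx.le hw0.le, ← Real.rpow_mul hnL.le]
      have : 1 / α * (-α) = -1 := by field_simp
      rw [this, Real.rpow_neg_one]
    -- log z
    have hlogz : Real.log z = Real.log x + (1 / α) * (Real.log n + Real.log (Real.log n)) := by
      rw [hzdef, Real.log_mul hx.ne' (ne_of_gt hw0), Real.log_rpow hnL,
        Real.log_mul hn0.ne' hL0.ne']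
    obtain ⟨hub, hlb⟩ := hbound z hzM
    constructor
    · rw [hPeq]
      refine le_trans (mul_le_mul_of_nonneg_left hub hn0.le) (le_of_eq ?_)
      rw [hzα, hlogz]
      field_simp
      ring
    · rw [hPeq]
      refine le_trans (le_of_eq ?_) (mul_le_mul_of_nonneg_left hlb hn0.le)
      rw [hzα, hlogz]
      field_simp
      ring
  -- conclude via order-topology characterization
  rw [tendsto_order]
  constructor
  · -- ∀ c < x^{-α}, eventually c < f n
    intro c hc
    set ε : ℝ := min (1/2) ((x ^ (-α) - c) / (4 * x ^ (-α))) with hεdef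
    have hε : 0 < ε := lt_min (by norm_num) (div_pos (by linarith) (by positivity))
    have hε1 : ε < 1 := lt_of_le_of_lt (min_le_left _ _) (by norm_num)
    have hεle : ε ≤ (x ^ (-α) - c) / (4 * x ^ (-α)) := min_le_right _ _
    have hKc : c < (1 - ε) ^ 2 * x ^ (-α) := by
      have h4 : ε * (4 * x ^ (-α)) ≤ x ^ (-α) - c :=
        (le_div_iff₀ (by positivity)).1 hεle
      nlinarith [sq_nonneg ε, mul_pos hε hxα]
    obtain ⟨C, hC0, hev⟩ := main ε hε hε1
    have hg : Tendsto (fun n : ℕ => x ^ (-α) * ((-C + (1 - ε) ^ 2 * α * Real.log x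
        + (1 - ε) ^ 2 * (Real.log n + Real.log (Real.log n))) / Real.log n)) atTop
        (nhds (x ^ (-α) * (1 - ε) ^ 2)) :=
      (aux_tendsto (-C + (1 - ε) ^ 2 * α * Real.log x) ((1 - ε) ^ 2)).const_mul _
    have hcg : ∀ᶠ n : ℕ in atTop, c < x ^ (-α) * ((-C + (1 - ε) ^ 2 * α * Real.log x
        + (1 - ε) ^ 2 * (Real.log n + Real.log (Real.log n))) / Real.log n) :=
      hg.eventually_const_lt (by nlinarith)
    filter_upwards [hev, hcg] with n h1 h2
    exact lt_of_lt_of_le h2 h1.2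
  · intro c hc
    set ε : ℝ := min (1/2) ((c - x ^ (-α)) / (6 * x ^ (-α))) with hεdef
    have hε : 0 < ε := lt_min (by norm_num) (div_pos (by linarith) (by positivity))
    have hε1 : ε < 1 := lt_of_le_of_lt (min_le_left _ _) (by norm_num)
    have hεle : ε ≤ (c - x ^ (-α)) / (6 * x ^ (-α)) := min_le_right _ _
    have hεhalf : ε ≤ 1/2 := min_le_left _ _
    have hKc : (1 + ε) ^ 2 * x ^ (-α) < c := by
      have h6 : ε * (6 * x ^ (-α)) ≤ c - x ^ (-α) :=
        (le_div_iff₀ (by positivity)).1 hεle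
      nlinarith [mul_pos hε hxα, sq_nonneg ε]
    obtain ⟨C, hC0, hev⟩ := main ε hε hε1
    have hg : Tendsto (fun n : ℕ => x ^ (-α) * ((C + (1 + ε) ^ 2 * α * Real.log x
        + (1 + ε) ^ 2 * (Real.log n + Real.log (Real.log n))) / Real.log n)) atTop
        (nhds (x ^ (-α) * (1 + ε) ^ 2)) :=
      (aux_tendsto (C + (1 + ε) ^ 2 * α * Real.log x) ((1 + ε) ^ 2)).const_mul _
    have hcg : ∀ᶠ n : ℕ in atTop, x ^ (-α) * ((C + (1 + ε) ^ 2 * α * Real.log x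
        + (1 + ε) ^ 2 * (Real.log n + Real.log (Real.log n))) / Real.log n) < c :=
      hg.eventually_lt_const (by nlinarith)
    filter_upwards [hev, hcg] with n h1 h2
    exact lt_of_le_of_lt h1.1 h2
end

section
/- Let T be a positive random variable with P(T > t) ~ t^{-α}, α > 0. For A = A(n) → ∞ and B = B(n) → ∞ with B/A → ∞, the truncated moment ∫_{(A,B]} s^α dF_T(s) satisfies ∫_{(A,B]} s^α dF_T(s) = O(1) + (1+o(1)) α log(B/A). In particular if B/A = c (log n)^{1/α} for a constant c > 0, then ∫_{(A,B]} s^α dF_T(s) ~ (1/1) · log log n as n → ∞. -/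
open MeasureTheory ProbabilityTheory Filter
open Set ENNReal

lemma tmbs_identity
    {Ω : Type*} [MeasurableSpace Ω] (μ : Measure Ω) [IsProbabilityMeasure μ]
    (T : Ω → ℝ) (hmT : Measurable T) (hTpos : ∀ ω, 0 < T ω)
    (α : ℝ) (hα : 0 < α) (a b : ℝ) (ha : 1 ≤ a) (hab : a < b) :
    (∫ s in Set.Ioc a b, s ^ α ∂(Measure.map T μ)) =
      a ^ α * (μ {ω | T ω > a}).toReal - b ^ α * (μ {ω | T ω > b}).toReal
        + ∫ u in Set.Ioc (a ^ α) (b ^ α), (μ {ω | T ω > u ^ (1/α)}).toReal := by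
  set G : ℝ → ℝ := fun t => (μ {ω | T ω > t}).toReal with hGdef
  have hGanti : Antitone G := by
    intro s t hst
    exact ENNReal.toReal_mono (measure_ne_top μ _)
      (measure_mono (fun ω hω => lt_of_le_of_lt hst hω))
  have hGm : Measurable G := (Antitone.measurable hGanti)
  have ha0 : (0:ℝ) < a := lt_of_lt_of_le one_pos ha
  have hb0 : (0:ℝ) < b := ha0.trans hab
  have hmeasT : ∀ x : ℝ, MeasurableSet {ω | T ω > x} := fun x =>
    hmT measurableSet_Ioi
  -- the indicator function
  set g : Ω → ℝ := fun ω => (Set.Ioc a b).indicator (fun s => s ^ α) (T ω) with hgdef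
  have hgmeas : Measurable g :=
    (((Real.continuous_rpow_const hα.le).measurable).indicator measurableSet_Ioc).comp hmT
  have hgnn : ∀ ω, 0 ≤ g ω := fun ω =>
    Set.indicator_nonneg (fun s hs => Real.rpow_nonneg (le_of_lt (ha0.trans hs.1)) α) _
  have hgbd : ∀ ω, |g ω| ≤ b ^ α := by
    intro ω
    rw [abs_of_nonneg (hgnn ω)]
    by_cases h : T ω ∈ Set.Ioc a b
    · simp only [hgdef, Set.indicator_of_mem h]
      exact Real.rpow_le_rpow (le_of_lt ((hTpos ω))) h.2 hα.le
    · simp [hgdef, Set.indicator_of_notMem h]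
      positivity
  have hgint : Integrable g μ :=
    (integrable_const (b ^ α)).mono' hgmeas.aestronglyMeasurable (ae_of_all _ hgbd)
  -- step 1 : pushforward
  have step1 : (∫ s in Set.Ioc a b, s ^ α ∂(Measure.map T μ)) = ∫ ω, g ω ∂μ := by
    rw [setIntegral_map measurableSet_Ioc
      ((Real.continuous_rpow_const hα.le).measurable).aestronglyMeasurable hmT.aemeasurable]
    rw [← integral_indicator (hmT measurableSet_Ioc)]
    rfl
  -- step 2 : layer cake
  have step2 : ∫ ω, g ω ∂μ = ∫ t in Set.Ioi (0:ℝ),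
      ENNReal.toReal (μ {ω | t < g ω}) :=
    hgint.integral_eq_integral_meas_lt (ae_of_all _ hgnn)
  -- tail set identity
  have tail_set : ∀ t : ℝ, 0 < t →
      {ω | t < g ω} = {ω | T ω > max a (t ^ (1/α))} \ {ω | T ω > b} := by
    intro t ht
    ext ω
    simp only [Set.mem_setOf_eq, Set.mem_diff, hgdef, gt_iff_lt, not_lt]
    constructor
    · intro h
      by_cases hm : T ω ∈ Set.Ioc a b
      · rw [Set.indicator_of_mem hm] at h
        refine ⟨max_lt (Set.mem_Ioc.mp hm).1 ?_, (Set.mem_Ioc.mp hm).2⟩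
        have : (t ^ (1/α)) ^ α < (T ω) ^ α := by
          rw [one_div, Real.rpow_inv_rpow ht.le hα.ne']
          exact h
        exact (Real.rpow_lt_rpow_iff (Real.rpow_nonneg ht.le _) (hTpos ω).le hα).mp this
      · rw [Set.indicator_of_notMem hm] at h; exact absurd h (not_lt.mpr ht.le)
    · rintro ⟨h1, h2⟩
      have haT : a < T ω := lt_of_le_of_lt (le_max_left _ _) h1
      have htT : t ^ (1/α) < T ω := lt_of_le_of_lt (le_max_right _ _) h1
      rw [Set.indicator_of_mem (Set.mem_Ioc.mpr ⟨haT, h2⟩)]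
      have := Real.rpow_lt_rpow (Real.rpow_nonneg ht.le _) htT hα
      rwa [one_div, Real.rpow_inv_rpow ht.le hα.ne'] at this
  -- tail value
  have tail_val : ∀ t : ℝ, t ∈ Set.Ioi (0:ℝ) →
      ENNReal.toReal (μ {ω | t < g ω}) =
        Set.indicator (Set.Ioc (0:ℝ) (b ^ α))
          (fun t => G (max a (t ^ (1/α))) - G b) t := by
    intro t ht
    rw [tail_set t ht]
    by_cases hle : t ≤ b ^ α
    · rw [Set.indicator_of_mem (Set.mem_Ioc.mpr ⟨Set.mem_Ioi.mp ht, hle⟩)]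
      have hmb : max a (t ^ (1/α)) ≤ b := by
        refine max_le hab.le ?_
        calc t ^ (1/α) ≤ (b ^ α) ^ (1/α) :=
              Real.rpow_le_rpow (le_of_lt ht) hle (by positivity)
          _ = b := by rw [one_div, Real.rpow_rpow_inv hb0.le hα.ne']
      have hsub : {ω | T ω > b} ⊆ {ω | T ω > max a (t ^ (1/α))} :=
        fun ω hω => lt_of_le_of_lt hmb hω
      rw [measure_diff hsub (hmeasT b).nullMeasurableSet (measure_ne_top μ _),
        ENNReal.toReal_sub_of_le (measure_mono hsub) (measure_ne_top μ _)]
    · rw [Set.indicator_of_notMem (fun hm => hle hm.2)]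
      have hempty : {ω | T ω > max a (t ^ (1/α))} \ {ω | T ω > b} = ∅ := by
        apply Set.eq_empty_iff_forall_notMem.mpr
        rintro ω ⟨h1, h2⟩
        rw [Set.mem_setOf_eq, gt_iff_lt, not_lt] at h2
        rw [Set.mem_setOf_eq] at h1
        have htT : t ^ (1/α) < T ω := lt_of_le_of_lt (le_max_right _ _) h1
        have h2' : t < T ω ^ α := by
          have := Real.rpow_lt_rpow (Real.rpow_nonneg (le_of_lt (Set.mem_Ioi.mp ht)) _) htT hα
          rwa [one_div, Real.rpow_inv_rpow (le_of_lt (Set.mem_Ioi.mp ht)) hα.ne'] at this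
        have h3 : T ω ^ α ≤ b ^ α := Real.rpow_le_rpow (hTpos ω).le h2 hα.le
        exact hle ((h2'.trans_le h3).le)
      rw [hempty]
      simp
  -- now compute
  set F : ℝ → ℝ := fun t => G (max a (t ^ (1/α))) - G b with hFdef
  have hFmeas : Measurable F := by
    apply Measurable.sub _ measurable_const
    exact hGm.comp (measurable_const.max
      ((Real.continuous_rpow_const (by positivity : (0:ℝ) ≤ 1/α)).measurable))
  have hG01 : ∀ x, 0 ≤ G x ∧ G x ≤ 1 := by
    intro x
    refine ⟨ENNReal.toReal_nonneg, ?_⟩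
    rw [show (1:ℝ) = (1:ℝ≥0∞).toReal by simp]
    exact ENNReal.toReal_mono ENNReal.one_ne_top prob_le_one
  have hFbdd : ∀ t, |F t| ≤ 1 := by
    intro t
    rw [abs_le]
    constructor
    · have h1 := (hG01 (max a (t ^ (1/α)))).1
      have h2 := (hG01 b).2
      simp only [hFdef]; linarith
    · have h1 := (hG01 (max a (t ^ (1/α)))).2
      have h2 := (hG01 b).1
      simp only [hFdef]; linarith
  have hFint : ∀ c d : ℝ, IntegrableOn F (Set.Ioc c d) volume := by
    intro c d
    exact (integrableOn_const measure_Ioc_lt_top.ne).mono'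
      hFmeas.aestronglyMeasurable (ae_of_all _ hFbdd)
  have ha0α : (0:ℝ) ≤ a ^ α := by positivity
  have habα : a ^ α ≤ b ^ α := Real.rpow_le_rpow ha0.le hab.le hα.le
  rw [step1, step2, setIntegral_congr_fun measurableSet_Ioi tail_val,
    setIntegral_indicator measurableSet_Ioc,
    Set.inter_eq_self_of_subset_right Set.Ioc_subset_Ioi_self,
    ← Set.Ioc_union_Ioc_eq_Ioc ha0α habα,
    setIntegral_union (Set.Ioc_disjoint_Ioc_of_le le_rfl) measurableSet_Ioc (hFint _ _) (hFint _ _)]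
  have piece1 : (∫ t in Set.Ioc (0:ℝ) (a ^ α), F t) = a ^ α * (G a - G b) := by
    rw [setIntegral_congr_fun measurableSet_Ioc
      (show Set.EqOn F (fun _ => G a - G b) (Set.Ioc 0 (a ^ α)) by
        intro t htm
        have : t ^ (1/α) ≤ a := by
          calc t ^ (1/α) ≤ (a ^ α) ^ (1/α) :=
                Real.rpow_le_rpow htm.1.le htm.2 (by positivity)
            _ = a := by rw [one_div, Real.rpow_rpow_inv ha0.le hα.ne']
        simp only [hFdef, max_eq_left this]),
      setIntegral_const, measureReal_def, Real.volume_Ioc, sub_zero, ENNReal.toReal_ofReal ha0α,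
      smul_eq_mul]
  have piece2 : (∫ t in Set.Ioc (a ^ α) (b ^ α), F t) =
      (∫ t in Set.Ioc (a ^ α) (b ^ α), G (t ^ (1/α))) - (b ^ α - a ^ α) * G b := by
    rw [setIntegral_congr_fun measurableSet_Ioc
      (show Set.EqOn F (fun t => G (t ^ (1/α)) - G b) (Set.Ioc (a ^ α) (b ^ α)) by
        intro t htm
        have : a ≤ t ^ (1/α) := by
          calc a = (a ^ α) ^ (1/α) := by rw [one_div, Real.rpow_rpow_inv ha0.le hα.ne']
            _ ≤ t ^ (1/α) := Real.rpow_le_rpow ha0α htm.1.le (by positivity)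
        simp only [hFdef, max_eq_right this])]
    have hint1 : IntegrableOn (fun t => G (t ^ (1/α))) (Set.Ioc (a ^ α) (b ^ α)) volume := by
      refine Integrable.mono' (g := fun _ => (1:ℝ))
        (integrableOn_const measure_Ioc_lt_top.ne)
        ((hGm.comp ((Real.continuous_rpow_const (by positivity : (0:ℝ) ≤ 1/α)).measurable)).aestronglyMeasurable) (ae_of_all _ ?_)
      intro t
      show |G (t ^ (1/α))| ≤ 1
      rw [abs_of_nonneg (hG01 _).1]
      exact (hG01 _).2
    rw [integral_sub hint1 (integrableOn_const measure_Ioc_lt_top.ne),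
      setIntegral_const, measureReal_def, Real.volume_Ioc, ENNReal.toReal_ofReal (by linarith), smul_eq_mul]
  rw [piece1, piece2]
  ring

lemma tmbs_key
    {Ω : Type*} [MeasurableSpace Ω] (μ : Measure Ω) [IsProbabilityMeasure μ]
    (T : Ω → ℝ) (hmT : Measurable T) (hTpos : ∀ ω, 0 < T ω)
    (α : ℝ) (hα : 0 < α)
    (hT : Tendsto (fun t => t ^ α * (μ {ω | T ω > t}).toReal) atTop (nhds 1))
    (A B : ℕ → ℝ) (hAB : ∀ n, A n < B n)
    (hA : Tendsto A atTop atTop) (hB : Tendsto B atTop atTop)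
    (hBA : Tendsto (fun n => B n / A n) atTop atTop) :
    Tendsto (fun n => (∫ s in Set.Ioc (A n) (B n), s ^ α ∂(Measure.map T μ)) /
      (α * Real.log (B n / A n))) atTop (nhds 1) := by
  set G : ℝ → ℝ := fun t => (μ {ω | T ω > t}).toReal with hGdef
  have hGanti : Antitone G := by
    intro s t hst
    exact ENNReal.toReal_mono (measure_ne_top μ _)
      (measure_mono (fun ω hω => lt_of_le_of_lt hst hω))
  have hGm : Measurable G := Antitone.measurable hGanti
  have hG01 : ∀ x, 0 ≤ G x ∧ G x ≤ 1 := by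
    intro x
    refine ⟨ENNReal.toReal_nonneg, ?_⟩
    rw [show (1:ℝ) = (1:ℝ≥0∞).toReal by simp]
    exact ENNReal.toReal_mono ENNReal.one_ne_top prob_le_one
  set I : ℕ → ℝ := fun n => ∫ s in Set.Ioc (A n) (B n), s ^ α ∂(Measure.map T μ) with hIdef
  set L : ℕ → ℝ := fun n => α * Real.log (B n / A n) with hLdef
  set D : ℕ → ℝ := fun n => (A n) ^ α * G (A n) - (B n) ^ α * G (B n) with hDdef
  set J : ℕ → ℝ := fun n => ∫ u in Set.Ioc ((A n) ^ α) ((B n) ^ α), G (u ^ (1/α)) with hJdef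
  have hL : Tendsto L atTop atTop :=
    (Real.tendsto_log_atTop.comp hBA).const_mul_atTop hα
  have hA1 : ∀ᶠ n in atTop, (1:ℝ) ≤ A n := hA.eventually_ge_atTop 1
  have hId : ∀ᶠ n in atTop, I n = D n + J n := by
    filter_upwards [hA1] with n hn
    have := tmbs_identity μ T hmT hTpos α hα (A n) (B n) hn (hAB n)
    simp only [hIdef, hDdef, hJdef]
    rw [this]
  have hD0 : Tendsto D atTop (nhds 0) := by
    have h1 : Tendsto (fun n => (A n) ^ α * G (A n)) atTop (nhds 1) := hT.comp hA
    have h2 : Tendsto (fun n => (B n) ^ α * G (B n)) atTop (nhds 1) := hT.comp hB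
    simpa using h1.sub h2
  have hD_div : Tendsto (fun n => D n / L n) atTop (nhds 0) := by
    have := hD0.mul hL.inv_tendsto_atTop
    simpa [div_eq_mul_inv] using this
  have hJ_div : Tendsto (fun n => J n / L n) atTop (nhds 1) := by
    rw [Metric.tendsto_atTop]
    intro ε hε
    have hTev := Metric.tendsto_nhds.mp hT (ε/2) (half_pos hε)
    rw [eventually_atTop] at hTev
    obtain ⟨M, hM⟩ := hTev
    have hev : ∀ᶠ n in atTop, A n ≥ max M 1 ∧ 0 < L n :=
      (hA.eventually_ge_atTop (max M 1)).and (hL.eventually_gt_atTop 0)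
    rw [eventually_atTop] at hev
    obtain ⟨N, hN⟩ := hev
    refine ⟨N, fun n hn => ?_⟩
    obtain ⟨hnA, hnL⟩ := hN n hn
    set a := A n
    set b := B n
    have ha1 : (1:ℝ) ≤ a := le_trans (le_max_right _ _) hnA
    have ha0 : (0:ℝ) < a := lt_of_lt_of_le one_pos ha1
    have hb0 : (0:ℝ) < b := ha0.trans (hAB n)
    have ha0α : (0:ℝ) < a ^ α := Real.rpow_pos_of_pos ha0 α
    have habα : a ^ α ≤ b ^ α := Real.rpow_le_rpow ha0.le (hAB n).le hα.le
    -- pointwise bounds on the interval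
    have hbound : ∀ u ∈ Set.Ioc (a ^ α) (b ^ α),
        (1 - ε/2) * u⁻¹ ≤ G (u ^ (1/α)) ∧ G (u ^ (1/α)) ≤ (1 + ε/2) * u⁻¹ := by
      intro u hu
      have hu0 : 0 < u := ha0α.trans hu.1
      have htge : a ≤ u ^ (1/α) := by
        calc a = (a ^ α) ^ (1/α) := by rw [one_div, Real.rpow_rpow_inv ha0.le hα.ne']
          _ ≤ u ^ (1/α) := Real.rpow_le_rpow ha0α.le hu.1.le (by positivity)
      have htM : M ≤ u ^ (1/α) := le_trans (le_trans (le_max_left _ _) hnA) htge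
      have hdist := hM _ htM
      rw [Real.dist_eq] at hdist
      have hupow : (u ^ (1/α)) ^ α = u := by
        rw [one_div, Real.rpow_inv_rpow hu0.le hα.ne']
      rw [hupow] at hdist
      have h1 : u * G (u ^ (1/α)) ≤ 1 + ε/2 := by
        have := abs_le.mp hdist.le
        linarith [this.2]
      have h2 : 1 - ε/2 ≤ u * G (u ^ (1/α)) := by
        have := abs_le.mp hdist.le
        linarith [this.1]
      constructor
      · rw [← div_eq_mul_inv, div_le_iff₀ hu0, mul_comm]
        exact h2
      · rw [← div_eq_mul_inv, le_div_iff₀ hu0, mul_comm]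
        exact h1
    have hIoc_int_inv : IntegrableOn (fun u : ℝ => u⁻¹) (Set.Ioc (a^α) (b^α)) volume := by
      refine (intervalIntegrable_iff_integrableOn_Ioc_of_le habα).mp
        (intervalIntegral.intervalIntegrable_inv (fun x hx => ?_) continuousOn_id)
      rw [Set.uIcc_of_le habα] at hx
      exact ne_of_gt (lt_of_lt_of_le ha0α hx.1)
    have hGint : IntegrableOn (fun u => G (u ^ (1/α))) (Set.Ioc (a^α) (b^α)) volume := by
      refine Integrable.mono' (g := fun _ => (1:ℝ))
        (integrableOn_const measure_Ioc_lt_top.ne)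
        ((hGm.comp ((Real.continuous_rpow_const
          (by positivity : (0:ℝ) ≤ 1/α)).measurable)).aestronglyMeasurable)
        (ae_of_all _ ?_)
      intro t
      show |G (t ^ (1/α))| ≤ 1
      rw [abs_of_nonneg (hG01 _).1]
      exact (hG01 _).2
    have hinv_val : (∫ u in Set.Ioc (a^α) (b^α), u⁻¹) = L n := by
      rw [← intervalIntegral.integral_of_le habα, integral_inv (by
        rw [Set.uIcc_of_le habα]
        intro hx
        exact absurd hx.1 (not_le.mpr ha0α))]
      rw [← Real.div_rpow hb0.le ha0.le, Real.log_rpow (div_pos hb0 ha0)]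
    have hup : J n ≤ (1 + ε/2) * L n := by
      calc J n ≤ ∫ u in Set.Ioc (a^α) (b^α), (1 + ε/2) * u⁻¹ :=
            setIntegral_mono_on hGint (hIoc_int_inv.const_mul _) measurableSet_Ioc
              (fun u hu => (hbound u hu).2)
        _ = (1 + ε/2) * L n := by rw [integral_const_mul, hinv_val]
    have hlo : (1 - ε/2) * L n ≤ J n := by
      calc (1 - ε/2) * L n = ∫ u in Set.Ioc (a^α) (b^α), (1 - ε/2) * u⁻¹ := by
            rw [integral_const_mul, hinv_val]
        _ ≤ J n := setIntegral_mono_on (hIoc_int_inv.const_mul _) hGint measurableSet_Ioc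
              (fun u hu => (hbound u hu).1)
    have h1 : J n / L n ≤ 1 + ε/2 := (div_le_iff₀ hnL).mpr hup
    have h2 : 1 - ε/2 ≤ J n / L n := (le_div_iff₀ hnL).mpr hlo
    rw [Real.dist_eq, abs_lt]
    constructor <;> [linarith [half_lt_self hε]; linarith [half_lt_self hε]]
  have hfinal : Tendsto (fun n => D n / L n + J n / L n) atTop (nhds 1) := by
    simpa using hD_div.add hJ_div
  have heq : (fun n => D n / L n + J n / L n) =ᶠ[atTop] fun n => I n / L n := by
    filter_upwards [hId] with n h
    rw [h, add_div]
  exact hfinal.congr' heq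


/-- For T with tail P(T > t) ~ t^{-α} and A(n), B(n) → ∞ with B/A → ∞, the truncated
moment ∫_{(A,B]} s^α dF_T(s) equals O(1) + (1+o(1)) α log(B/A); in particular if
B/A = c (log n)^{1/α} for c > 0, then ∫_{(A,B]} s^α dF_T(s) ~ log log n. -/
theorem truncated_moment_between_scales
    {Ω : Type*} [MeasurableSpace Ω] (μ : Measure Ω) [IsProbabilityMeasure μ]
    (T : Ω → ℝ) (hmT : Measurable T) (hTpos : ∀ ω, 0 < T ω)
    (α : ℝ) (hα : 0 < α)
    (hT : Tendsto (fun t => t ^ α * (μ {ω | T ω > t}).toReal) atTop (nhds 1))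
    (A B : ℕ → ℝ) (hAB : ∀ n, A n < B n)
    (hA : Tendsto A atTop atTop) (hB : Tendsto B atTop atTop)
    (hBA : Tendsto (fun n => B n / A n) atTop atTop) :
    (∃ e r : ℕ → ℝ,
        (∀ n, (∫ s in Set.Ioc (A n) (B n), s ^ α ∂(Measure.map T μ)) =
          e n + (1 + r n) * (α * Real.log (B n / A n))) ∧
        (∃ C : ℝ, ∀ n, |e n| ≤ C) ∧ Tendsto r atTop (nhds 0)) ∧
    (∀ c : ℝ, 0 < c → (∀ n, B n / A n = c * (Real.log n) ^ (1 / α)) →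
      Tendsto
        (fun n : ℕ => (∫ s in Set.Ioc (A n) (B n), s ^ α ∂(Measure.map T μ)) /
          Real.log (Real.log n))
        atTop (nhds 1)) := by

  have hkey := tmbs_key μ T hmT hTpos α hα hT A B hAB hA hB hBA
  set I : ℕ → ℝ := fun n => ∫ s in Set.Ioc (A n) (B n), s ^ α ∂(Measure.map T μ) with hIdef
  set L : ℕ → ℝ := fun n => α * Real.log (B n / A n) with hLdef
  have hL : Tendsto L atTop atTop :=
    (Real.tendsto_log_atTop.comp hBA).const_mul_atTop hα
  have hLne : ∀ᶠ n in atTop, L n ≠ 0 := (hL.eventually_gt_atTop 0).mono fun n h => h.ne'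
  constructor
  · obtain ⟨N, hN⟩ := eventually_atTop.mp hLne
    refine ⟨fun n => if L n = 0 then I n else 0,
      fun n => if L n = 0 then 0 else I n / L n - 1, ?_, ?_, ?_⟩
    · intro n
      show I n = (if L n = 0 then I n else 0) +
        (1 + if L n = 0 then 0 else I n / L n - 1) * L n
      by_cases h : L n = 0
      · rw [if_pos h, if_pos h, h, mul_zero, add_zero]
      · rw [if_neg h, if_neg h, add_sub_cancel, div_mul_cancel₀ _ h, zero_add]
    · refine ⟨∑ k ∈ Finset.range N, |if L k = 0 then I k else 0|, fun n => ?_⟩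
      show |if L n = 0 then I n else 0| ≤ _
      by_cases hn : n < N
      · exact Finset.single_le_sum (f := fun k => |if L k = 0 then I k else 0|)
          (fun k _ => abs_nonneg _) (Finset.mem_range.mpr hn)
      · rw [if_neg (hN n (le_of_not_gt hn)), abs_zero]
        exact Finset.sum_nonneg (fun k _ => abs_nonneg _)
    · have h0 : Tendsto (fun n => I n / L n - 1) atTop (nhds 0) := by
        simpa using hkey.sub_const 1
      refine h0.congr' ?_
      filter_upwards [hLne] with n h
      show I n / L n - 1 = if L n = 0 then 0 else I n / L n - 1
      rw [if_neg h]
  · intro c hc hc2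
    have hlogn : Tendsto (fun n : ℕ => Real.log n) atTop atTop :=
      Real.tendsto_log_atTop.comp tendsto_natCast_atTop_atTop
    have hll : Tendsto (fun n : ℕ => Real.log (Real.log n)) atTop atTop :=
      Real.tendsto_log_atTop.comp hlogn
    have hev : ∀ᶠ n : ℕ in atTop, L n = α * Real.log c + Real.log (Real.log n) := by
      filter_upwards [hlogn.eventually_gt_atTop 0] with n hn
      simp only [hLdef]
      rw [hc2 n, Real.log_mul (ne_of_gt hc) (ne_of_gt (Real.rpow_pos_of_pos hn _)),
        Real.log_rpow hn, mul_add, ← mul_assoc, mul_one_div_cancel hα.ne', one_mul]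
    have hLll : Tendsto (fun n => L n / Real.log (Real.log n)) atTop (nhds 1) := by
      have h1 : Tendsto (fun n : ℕ => α * Real.log c / Real.log (Real.log n) + 1)
          atTop (nhds 1) := by
        simpa using (tendsto_const_nhds.div_atTop hll).add
          (tendsto_const_nhds : Tendsto (fun _ : ℕ => (1:ℝ)) atTop (nhds 1))
      refine h1.congr' ?_
      filter_upwards [hev, hll.eventually_ne_atTop 0] with n h hne
      rw [h, add_div, div_self hne]
    have hprod : Tendsto (fun n => I n / L n * (L n / Real.log (Real.log n)))
        atTop (nhds 1) := by
      simpa using hkey.mul hLll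
    refine hprod.congr' ?_
    filter_upwards [hLne] with n h
    rw [div_mul_div_comm, mul_comm (I n) (L n), mul_div_mul_left _ _ h]
end
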